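/- arXiv:1108.2866 — 5 statements merged into one kernel-verified Lean document; each statement's English description precedes it below -/
import Mathlib

section
/- Let r ≥ 3 be an integer and G = C_2^r. Then C_0(G) = {η(C_2^r) - 3, η(C_2^r) - 2} = {2^r - 3, 2^r - 2}. -/
open Finset

section Aux
variable {V : Type*} [AddCommGroup V] [Module (ZMod 2) V]

lemma addSelf (x : V) : x + x = 0 := by
  have : x + x = ((1 : ZMod 2) + 1) • x := by rw [add_smul, one_smul]
  rw [this, show ((1 : ZMod 2) + 1) = 0 by decide, zero_smul]

lemma negEq (x : V) : -x = x := neg_eq_of_add_eq_zero_right (addSelf x)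

lemma nsmul_even {n : ℕ} (hn : 2 ∣ n) (x : V) : n • x = 0 := by
  obtain ⟨m, rfl⟩ := hn
  rw [mul_comm, mul_nsmul, two_nsmul, addSelf]

lemma sum_univ_zmod (n : ℕ) (hn : 2 ≤ n) : ∑ w : Fin n → ZMod 2, w = 0 := by
  funext i
  rw [Finset.sum_apply]
  have h1 : ∑ w : Fin n → ZMod 2, w i = ∑ p : ZMod 2 × ({ j // j ≠ i } → ZMod 2), p.1 :=
    Fintype.sum_equiv (Equiv.funSplitAt i (ZMod 2)) _ _ (fun w => rfl)
  rw [Pi.zero_apply, h1, Fintype.sum_prod_type]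
  simp only [Finset.sum_const, Finset.card_univ]
  rw [← Finset.smul_sum]
  apply nsmul_even
  rw [Fintype.card_fun]
  have hne : 0 < Fintype.card { j // j ≠ i } := by
    have : Nontrivial (Fin n) := Fin.nontrivial_iff_two_le.mpr hn
    obtain ⟨j, hj⟩ := exists_ne i
    exact Fintype.card_pos_iff.mpr ⟨⟨j, hj⟩⟩
  exact dvd_pow (by norm_num) hne.ne'

lemma sum_univ_V (V : Type*) [AddCommGroup V] [Module (ZMod 2) V] [Fintype V] [DecidableEq V]
    (h : 2 ≤ Module.finrank (ZMod 2) V) : ∑ v : V, v = 0 := by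
  have : Module.Finite (ZMod 2) V := Module.Finite.of_finite
  let e := (Module.finBasis (ZMod 2) V).equivFun
  have h1 : ∑ v : V, v = ∑ w : Fin (Module.finrank (ZMod 2) V) → ZMod 2, e.symm w :=
    Fintype.sum_bijective e e.bijective _ _ (fun v => (e.symm_apply_apply v).symm)
  rw [h1, ← map_sum, sum_univ_zmod _ h, map_zero]

lemma card_V (V : Type*) [AddCommGroup V] [Module (ZMod 2) V] [Fintype V] :
    Fintype.card V = 2 ^ Module.finrank (ZMod 2) V := by
  have := Module.card_eq_pow_finrank (K := ZMod 2) (V := V)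
  simpa using this

end Aux


universe u

lemma key (k : ℕ) (hk : 2 ≤ k) :
    ∀ (V : Type u) [AddCommGroup V] [Module (ZMod 2) V] [Fintype V] [DecidableEq V],
    Module.finrank (ZMod 2) V = k → ∀ t : ℕ,
    (t = 0 ∨ (3 ≤ t ∧ t ≤ 2 ^ k - 1 ∧ t ≠ 2 ^ k - 2 ∧ t ≠ 2 ^ k - 3)) →
    ∃ A : Finset V, (0 : V) ∉ A ∧ A.card = t ∧ ∑ x ∈ A, x = 0 := by
  induction k, hk using Nat.le_induction with
  | base =>
    intro V _ _ _ _ hrank t ht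
    have hc : Fintype.card V = 4 := by rw [card_V V, hrank]; norm_num
    rcases ht with rfl | ⟨h3, hub, -, -⟩
    · exact ⟨∅, by simp⟩
    · have ht3 : t = 3 := by norm_num at hub; omega
      subst ht3
      refine ⟨Finset.univ.erase 0, Finset.notMem_erase _ _, ?_, ?_⟩
      · rw [Finset.card_erase_of_mem (mem_univ _), Finset.card_univ, hc]
      · have h1 := Finset.add_sum_erase Finset.univ (fun x : V => x) (mem_univ 0)
        rw [sum_univ_V V (by rw [hrank])] at h1
        simpa using h1
  | succ k hk IH =>
    intro V _ _ _ _ hrank t ht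
    haveI : Module.Finite (ZMod 2) V := Module.Finite.of_finite
    have cardV : Fintype.card V = 2 ^ (k + 1) := by rw [card_V V, hrank]
    have hnt : Nontrivial V := by
      apply Fintype.one_lt_card_iff_nontrivial.mp
      rw [cardV]; exact Nat.one_lt_two_pow (by omega)
    obtain ⟨e, he0⟩ := exists_ne (0 : V)
    obtain ⟨W, hWc⟩ := (Submodule.span (ZMod 2) {e}).exists_isCompl
    haveI : Fintype ↥W := Fintype.ofFinite ↥W
    have hrankW : Module.finrank (ZMod 2) ↥W = k := by
      have h1 := Submodule.finrank_add_eq_of_isCompl hWc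
      rw [finrank_span_singleton he0, hrank] at h1
      omega
    have heW : e ∉ W := by
      intro h
      have h2 : e ∈ Submodule.span (ZMod 2) {e} ⊓ W :=
        ⟨Submodule.mem_span_singleton_self e, h⟩
      rw [hWc.inf_eq_bot] at h2
      exact he0 h2
    set emb : ↥W ↪ V := ⟨Subtype.val, Subtype.val_injective⟩ with hemb
    set FW : Finset V := Finset.univ.map emb with hFW
    have memFW : ∀ x : V, x ∈ FW ↔ x ∈ W := by
      intro x
      simp only [hFW, Finset.mem_map, Finset.mem_univ, true_and, hemb,
        Function.Embedding.coeFn_mk]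
      constructor
      · rintro ⟨a, rfl⟩; exact a.2
      · intro hx; exact ⟨⟨x, hx⟩, rfl⟩
    have sum_sub : ∀ (B : Finset ↥W), ∑ x ∈ B.map emb, x = ↑(∑ w ∈ B, w) := by
      intro B
      rw [Finset.sum_map]
      exact (map_sum W.subtype _ B).symm
    have sumFW : ∑ x ∈ FW, x = 0 := by
      rw [hFW, sum_sub, sum_univ_V ↥W (by rw [hrankW]; exact hk)]
      simp
    have cardFW : FW.card = 2 ^ k := by
      rw [hFW, Finset.card_map, Finset.card_univ, card_V ↥W, hrankW]
    have hk4 : 4 ≤ 2 ^ k := by calc 4 = 2^2 := rfl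
                                    _ ≤ 2^k := Nat.pow_le_pow_right (by norm_num) hk
    have h2k1 : 2 ^ (k+1) = 2 * 2 ^ k := by rw [pow_succ, mul_comm]
    -- small case
    have hsmall : ∀ t : ℕ, (t = 0 ∨ (3 ≤ t ∧ t ≤ 2 ^ k - 1)) →
        ∃ A : Finset V, (0 : V) ∉ A ∧ A.card = t ∧ ∑ x ∈ A, x = 0 := by
      rintro t (rfl | ⟨h3, hub⟩)
      · exact ⟨∅, by simp⟩
      by_cases hexc : t = 2 ^ k - 2 ∨ t = 2 ^ k - 3
      · -- exceptional values
        have hk3 : 3 ≤ k := by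
          by_contra h
          interval_cases k <;> omega
        have h8 : 8 ≤ 2 ^ k := by calc 8 = 2^3 := rfl
                                      _ ≤ 2^k := Nat.pow_le_pow_right (by norm_num) hk3
        set FW0 : Finset V := FW.erase 0 with hFW0
        have cardFW0 : FW0.card = 2 ^ k - 1 := by
          rw [hFW0, Finset.card_erase_of_mem ((memFW 0).mpr W.zero_mem), cardFW]
        have pick : ∀ bad : Finset V, bad.card ≤ 4 → ∃ x, x ∈ FW0 ∧ x ∉ bad := by
          intro bad hbad
          have h1 : 0 < (FW0 \ bad).card := by
            have := Finset.le_card_sdiff bad FW0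
            omega
          obtain ⟨x, hx⟩ := Finset.card_pos.mp h1
          rw [Finset.mem_sdiff] at hx
          exact ⟨x, hx.1, hx.2⟩
        obtain ⟨a, haF, -⟩ := pick ∅ (by simp)
        obtain ⟨b, hbF, hb⟩ := pick {a} (by simp)
        obtain ⟨c, hcF, hc⟩ := pick {a, b, a + b} (by
          have h1 := Finset.card_insert_le a (insert b ({a+b} : Finset V))
          have h2 := Finset.card_insert_le b ({a+b} : Finset V)
          have h3 : ({a+b} : Finset V).card = 1 := Finset.card_singleton _
          show (insert a (insert b ({a+b} : Finset V))).card ≤ 4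
          omega)
        obtain ⟨d, hdF, hd⟩ := pick {a, b, c, a + b + c} (by
          have h1 := Finset.card_insert_le a (insert b (insert c ({a+b+c} : Finset V)))
          have h2 := Finset.card_insert_le b (insert c ({a+b+c} : Finset V))
          have h3 := Finset.card_insert_le c ({a+b+c} : Finset V)
          have h4 : ({a+b+c} : Finset V).card = 1 := Finset.card_singleton _
          show (insert a (insert b (insert c ({a+b+c} : Finset V)))).card ≤ 4
          omega)
        simp only [Finset.mem_singleton] at hb
        simp only [Finset.mem_insert, Finset.mem_singleton, not_or] at hc hd
        have sumFW0 : ∑ x ∈ FW0, x = 0 := by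
          have h1 := Finset.add_sum_erase FW (fun x : V => x) ((memFW 0).mpr W.zero_mem)
          rw [sumFW] at h1
          simpa [hFW0] using h1
        have build : ∀ D : Finset V, D ⊆ FW0 → (∑ x ∈ D, x) ≠ 0 →
            ∃ A : Finset V, (0 : V) ∉ A ∧ A.card = 2 ^ k - 1 - D.card + 2 ∧
              ∑ x ∈ A, x = 0 := by
          intro D hDsub hs
          set s := ∑ x ∈ D, x with hsdef
          have hmemW : ∀ x ∈ FW0, x ∈ W := fun x hx =>
            (memFW x).mp (Finset.mem_of_mem_erase hx)
          have hsW : s ∈ W := W.sum_mem (fun x hx => hmemW x (hDsub hx))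
          have hesW : e + s ∉ W := by
            intro h
            have h2 := W.add_mem h hsW
            rw [add_assoc, addSelf, add_zero] at h2
            exact heW h2
          have hene : e ≠ e + s := by
            intro h
            exact hs (left_eq_add.mp h)
          have hdisj : Disjoint (FW0 \ D) ({e, e + s} : Finset V) := by
            rw [Finset.disjoint_left]
            intro x hx hx2
            have hxW : x ∈ W := hmemW x (Finset.mem_sdiff.mp hx).1
            rcases Finset.mem_insert.mp hx2 with rfl | hx3
            · exact heW hxW
            · rw [Finset.mem_singleton] at hx3
              subst hx3
              exact hesW hxW
          refine ⟨(FW0 \ D) ∪ {e, e + s}, ?_, ?_, ?_⟩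
          · intro h
            rcases Finset.mem_union.mp h with h | h
            · exact (Finset.mem_erase.mp (Finset.mem_sdiff.mp h).1).1 rfl
            · rcases Finset.mem_insert.mp h with h | h
              · exact he0 h.symm
              · rw [Finset.mem_singleton] at h
                apply hesW
                rw [← h]
                exact W.zero_mem
          · rw [Finset.card_union_of_disjoint hdisj, Finset.card_sdiff_of_subset hDsub,
              Finset.card_pair hene, cardFW0]
          · rw [Finset.sum_union hdisj, Finset.sum_pair hene]
            have h1 : e + (e + s) = s := by rw [← add_assoc, addSelf, zero_add]
            have h2 := Finset.sum_sdiff (f := fun x : V => x) hDsub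
            rw [sumFW0, ← hsdef] at h2
            rw [h1]
            exact h2
        rcases hexc with rfl | rfl
        · -- t = 2^k - 2, use D = {a, b, c}
          have hcard : ({a, b, c} : Finset V).card = 3 := by
            rw [Finset.card_insert_of_notMem (by simp [Ne.symm hb, Ne.symm hc.1]),
              Finset.card_insert_of_notMem (by simp [Ne.symm hc.2.1]),
              Finset.card_singleton]
          have hsub : ({a, b, c} : Finset V) ⊆ FW0 := by
            intro x hx
            rcases Finset.mem_insert.mp hx with rfl | hx
            · exact haF
            rcases Finset.mem_insert.mp hx with rfl | hx
            · exact hbF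
            rw [Finset.mem_singleton] at hx
            subst hx; exact hcF
          have hsne : (∑ x ∈ ({a, b, c} : Finset V), x) ≠ 0 := by
            rw [Finset.sum_insert (by simp [Ne.symm hb, Ne.symm hc.1]),
              Finset.sum_insert (by simp [Ne.symm hc.2.1]), Finset.sum_singleton]
            intro h
            apply hc.2.2
            have heq : a + b + (a + (b + c)) = c := by
              have : a + b + (a + (b + c)) = (a + a) + ((b + b) + c) := by abel
              rw [this, addSelf, addSelf, zero_add, zero_add]
            rw [h, add_zero] at heq
            exact heq.symm
          obtain ⟨A, h1, h2, h3⟩ := build {a, b, c} hsub hsne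
          exact ⟨A, h1, by rw [h2, hcard]; omega, h3⟩
        · -- t = 2^k - 3, use D = {a, b, c, d}
          have hne : a ∉ ({b, c, d} : Finset V) := by
            simp [Ne.symm hb, Ne.symm hc.1, Ne.symm hd.1]
          have hne2 : b ∉ ({c, d} : Finset V) := by simp [Ne.symm hc.2.1, Ne.symm hd.2.1]
          have hne3 : c ∉ ({d} : Finset V) := by simp [Ne.symm hd.2.2.1]
          have hcard : ({a, b, c, d} : Finset V).card = 4 := by
            rw [Finset.card_insert_of_notMem hne, Finset.card_insert_of_notMem hne2,
              Finset.card_insert_of_notMem hne3, Finset.card_singleton]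
          have hsub : ({a, b, c, d} : Finset V) ⊆ FW0 := by
            intro x hx
            rcases Finset.mem_insert.mp hx with rfl | hx
            · exact haF
            rcases Finset.mem_insert.mp hx with rfl | hx
            · exact hbF
            rcases Finset.mem_insert.mp hx with rfl | hx
            · exact hcF
            rw [Finset.mem_singleton] at hx
            subst hx; exact hdF
          have hsne : (∑ x ∈ ({a, b, c, d} : Finset V), x) ≠ 0 := by
            rw [Finset.sum_insert hne, Finset.sum_insert hne2, Finset.sum_insert hne3,
              Finset.sum_singleton]
            intro h
            apply hd.2.2.2
            have heq : a + b + c + (a + (b + (c + d))) = d := by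
              have : a + b + c + (a + (b + (c + d))) = (a + a) + ((b + b) + ((c + c) + d)) := by
                abel
              rw [this, addSelf, addSelf, addSelf, zero_add, zero_add, zero_add]
            rw [h, add_zero] at heq
            exact heq.symm
          obtain ⟨A, h1, h2, h3⟩ := build {a, b, c, d} hsub hsne
          exact ⟨A, h1, by rw [h2, hcard]; omega, h3⟩
      · push_neg at hexc
        obtain ⟨A', hA0, hAc, hAs⟩ := IH ↥W hrankW t (Or.inr ⟨h3, hub, hexc.1, hexc.2⟩)
        refine ⟨A'.map emb, ?_, by rw [Finset.card_map, hAc], ?_⟩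
        · intro h
          simp only [Finset.mem_map, hemb, Function.Embedding.coeFn_mk] at h
          obtain ⟨a, ha, ha0⟩ := h
          apply hA0
          rwa [show a = 0 from Subtype.ext ha0] at ha
        · rw [sum_sub, hAs]; simp
    -- main split
    rcases ht with rfl | ⟨h3, hub, hne2, hne3⟩
    · exact hsmall 0 (Or.inl rfl)
    by_cases hle : t ≤ 2 ^ k - 1
    · exact hsmall t (Or.inr ⟨h3, hle⟩)
    · set t' := 2 ^ (k + 1) - 1 - t with ht'
      obtain ⟨A', h0', hc', hs'⟩ := hsmall t' (by omega)
      have hsub : A' ⊆ Finset.univ.erase 0 := fun x hx =>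
        Finset.mem_erase.mpr ⟨fun h => h0' (h ▸ hx), Finset.mem_univ x⟩
      refine ⟨(Finset.univ.erase 0) \ A',
        fun h => (Finset.mem_erase.mp (Finset.mem_sdiff.mp h).1).1 rfl, ?_, ?_⟩
      · rw [Finset.card_sdiff_of_subset hsub, Finset.card_erase_of_mem (mem_univ _),
          Finset.card_univ, cardV, hc']
        omega
      · have h1 := Finset.sum_sdiff (f := id) hsub
        have h2 : ∑ x ∈ Finset.univ.erase (0 : V), x = 0 := by
          have h3 := Finset.add_sum_erase Finset.univ (fun x : V => x) (mem_univ 0)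
          rw [sum_univ_V V (by rw [hrank]; omega)] at h3
          simpa using h3
        simp only [id] at h1
        rw [hs'] at h1
        rw [← h1] at h2
        simpa using h2


/-- `S` contains a short zero-sum subsequence: a nonempty subsequence with sum `0`
whose length is at most `exp(G)`. -/
def HasShortZeroSumSubseq {G : Type*} [AddCommGroup G] (S : Multiset G) : Prop :=
  ∃ T, T ≤ S ∧ T.sum = 0 ∧ 1 ≤ Multiset.card T ∧ Multiset.card T ≤ AddMonoid.exponent G

/-- `η G` : the smallest `d` such that every sequence over `G` of length at least `d`
contains a short zero-sum subsequence. -/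
noncomputable def etaConst (G : Type*) [AddCommGroup G] : ℕ :=
  sInf {d : ℕ | ∀ S : Multiset G, d ≤ Multiset.card S → HasShortZeroSumSubseq S}

/-- `D G` : the Davenport constant, the smallest `d` such that every sequence over `G`
of length at least `d` contains a nonempty zero-sum subsequence. -/
noncomputable def davenport (G : Type*) [AddCommGroup G] : ℕ :=
  sInf {d : ℕ | ∀ S : Multiset G, d ≤ Multiset.card S → ∃ T, T ≤ S ∧ T ≠ 0 ∧ T.sum = 0}

/-- `C₀(G)` : the set of `t ∈ [D(G)+1, η(G)-1]` such that every zero-sum sequence over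
`G` of length exactly `t` contains a short zero-sum subsequence. -/
def C0 (G : Type*) [AddCommGroup G] : Set ℕ :=
  {t | davenport G + 1 ≤ t ∧ t ≤ etaConst G - 1 ∧
    ∀ S : Multiset G, Multiset.card S = t → S.sum = 0 → HasShortZeroSumSubseq S}


section Main
variable (r : ℕ)

local notation "G" => (Fin r → ZMod 2)

lemma expG (hr : 3 ≤ r) : AddMonoid.exponent G = 2 := by
  have hnt : Nontrivial G := by
    refine ⟨0, (fun _ => 1), fun h => ?_⟩
    have := congrFun h ⟨0, by omega⟩
    simp only [Pi.zero_apply] at this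
    exact zero_ne_one this
  have hdvd : AddMonoid.exponent G ∣ 2 :=
    AddMonoid.exponent_dvd_of_forall_nsmul_eq_zero (fun g => by rw [two_nsmul]; exact addSelf g)
  rcases (Nat.dvd_prime Nat.prime_two).mp hdvd with h | h
  · exfalso
    obtain ⟨x, y, hxy⟩ := hnt
    apply hxy
    have hx := AddMonoid.exponent_nsmul_eq_zero x
    have hy := AddMonoid.exponent_nsmul_eq_zero y
    rw [h, one_nsmul] at hx hy
    rw [hx, hy]
  · exact h

lemma short_of_mem_zero (hr : 3 ≤ r) {S : Multiset G} (h : (0 : G) ∈ S) :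
    HasShortZeroSumSubseq S := by
  refine ⟨{0}, Multiset.singleton_le.mpr h, by simp, by simp, ?_⟩
  rw [expG r hr]
  simp

lemma short_of_not_nodup (hr : 3 ≤ r) {S : Multiset G} (h : ¬S.Nodup) :
    HasShortZeroSumSubseq S := by
  rw [Multiset.nodup_iff_count_le_one] at h
  push_neg at h
  obtain ⟨x, hx⟩ := h
  refine ⟨Multiset.replicate 2 x, ?_, ?_, by simp, by rw [expG r hr]; simp⟩
  · rw [Multiset.le_iff_count]
    intro a
    by_cases ha : a = x
    · subst ha
      rw [Multiset.count_replicate_self]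
      omega
    · rw [Multiset.count_replicate, if_neg (fun hh => ha hh.symm)]
      omega
  · rw [Multiset.sum_replicate, two_nsmul]
    exact addSelf x

lemma no_short (hr : 3 ≤ r) {S : Multiset G} (hnd : S.Nodup) (h0 : (0 : G) ∉ S) :
    ¬ HasShortZeroSumSubseq S := by
  rintro ⟨T, hTS, hTsum, hT1, hT2⟩
  rw [expG r hr] at hT2
  interval_cases hc : (Multiset.card T)
  · obtain ⟨x, rfl⟩ := Multiset.card_eq_one.mp hc
    rw [Multiset.sum_singleton] at hTsum
    subst hTsum
    exact h0 (Multiset.mem_of_le hTS (Multiset.mem_singleton_self _))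
  · obtain ⟨x, y, rfl⟩ := Multiset.card_eq_two.mp hc
    have hxy : y = x := by
      have : y = -x := eq_neg_of_add_eq_zero_right (by simpa using hTsum)
      rw [this, negEq]
    subst hxy
    have hcount := Multiset.count_le_of_le y hTS
    have : Multiset.count y {y, y} = 2 := by
      rw [show ({y, y} : Multiset G) = y ::ₘ {y} from rfl]
      rw [Multiset.count_cons_self, Multiset.count_singleton_self]
    rw [this] at hcount
    rw [Multiset.nodup_iff_count_le_one] at hnd
    have := hnd y
    omega

lemma cardG : Fintype.card G = 2 ^ r := by
  rw [Fintype.card_fun, ZMod.card, Fintype.card_fin]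

lemma finrankG : Module.finrank (ZMod 2) G = r := by
  rw [Module.finrank_fintype_fun_eq_card, Fintype.card_fin]

lemma etaG (hr : 3 ≤ r) : etaConst G = 2 ^ r := by
  have hset : {d : ℕ | ∀ S : Multiset G, d ≤ Multiset.card S → HasShortZeroSumSubseq S}
      = Set.Ici (2 ^ r) := by
    ext d
    simp only [Set.mem_setOf_eq, Set.mem_Ici]
    constructor
    · intro h
      by_contra hd
      push_neg at hd
      set S := (Finset.univ.erase (0 : G)).val with hS
      have hcard : Multiset.card S = 2 ^ r - 1 := by
        rw [hS, ← Finset.card_def]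
        rw [Finset.card_erase_of_mem (mem_univ _), Finset.card_univ, cardG]
      have := h S (by omega)
      exact no_short r hr (Finset.nodup _) (by
        intro hmem
        have : (0 : G) ∈ Finset.univ.erase (0 : G) := hmem
        exact (Finset.mem_erase.mp this).1 rfl) this
    · intro hd S hcard
      by_contra hshort
      have hnd : S.Nodup := by
        by_contra h
        exact hshort (short_of_not_nodup r hr h)
      have h0 : (0 : G) ∉ S := fun h => hshort (short_of_mem_zero r hr h)
      have h1 : S.toFinset ⊆ Finset.univ.erase 0 := fun x hx =>
        Finset.mem_erase.mpr ⟨fun hh => h0 (hh ▸ Multiset.mem_toFinset.mp hx), mem_univ _⟩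
      have h2 := Finset.card_le_card h1
      rw [Multiset.toFinset_card_of_nodup hnd,
        Finset.card_erase_of_mem (mem_univ _), Finset.card_univ, cardG] at h2
      have hp : 1 ≤ 2 ^ r := Nat.one_le_two_pow
      omega
  rw [etaConst, hset, csInf_Ici]

lemma davG (hr : 3 ≤ r) : davenport G = r + 1 := by
  have hset : {d : ℕ | ∀ S : Multiset G, d ≤ Multiset.card S →
      ∃ T, T ≤ S ∧ T ≠ 0 ∧ T.sum = 0} = Set.Ici (r + 1) := by
    ext d
    simp only [Set.mem_setOf_eq, Set.mem_Ici]
    constructor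
    · -- if d works then d ≥ r + 1, via the basis counterexample
      intro h
      by_contra hd
      push_neg at hd
      set f : Fin r → G := fun i => Pi.single i 1 with hf
      have hinj : Function.Injective f := by
        intro i j hij
        by_contra hne
        have h1 := congrFun hij i
        simp only [hf] at h1
        rw [Pi.single_eq_same, Pi.single_eq_of_ne hne] at h1
        exact one_ne_zero h1
      set B : Finset G := Finset.univ.image f with hB
      have hcardB : B.card = r := by
        rw [hB, Finset.card_image_of_injective _ hinj, Finset.card_univ, Fintype.card_fin]
      obtain ⟨T, hTS, hT0, hTsum⟩ := h B.val (by
        rw [← Finset.card_def, hcardB]; omega)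
      have hTnd : T.Nodup := Multiset.nodup_of_le hTS (Finset.nodup B)
      set C := T.toFinset with hC
      have hCT : C.val = T := by rw [hC, Multiset.toFinset_val, Multiset.dedup_eq_self.mpr hTnd]
      have hCB : C ⊆ B := fun x hx =>
        Multiset.mem_of_le hTS (Multiset.mem_toFinset.mp hx)
      have hCne : C.Nonempty := by
        rw [← Finset.card_pos, Finset.card_def, hCT]
        exact Multiset.card_pos.mpr hT0
      obtain ⟨x, hxC⟩ := hCne
      obtain ⟨i, -, hxi⟩ := Finset.mem_image.mp (hCB hxC)
      have hsum : ∑ y ∈ C, y = 0 := by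
        rw [Finset.sum_eq_multiset_sum, Multiset.map_id', hCT, hTsum]
      have heval : (∑ y ∈ C, y) i = 1 := by
        have hterm : ∀ y ∈ C, y i = if y = x then 1 else 0 := by
          intro y hy
          obtain ⟨j, -, hyj⟩ := Finset.mem_image.mp (hCB hy)
          by_cases hji : j = i
          · subst hji
            rw [← hyj, ← hxi]
            simp [hf, Pi.single_eq_same]
          · rw [← hyj]
            rw [if_neg (by rw [← hxi]; exact fun hh => hji (hinj hh))]
            exact Pi.single_eq_of_ne (Ne.symm hji) 1
        rw [Finset.sum_apply, Finset.sum_congr rfl hterm, Finset.sum_ite_eq' C x (fun _ => 1),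
          if_pos hxC]
      rw [hsum] at heval
      simp at heval
    · -- if d ≥ r+1 then every S of card ≥ d has a nonempty zero-sum subsequence
      intro hd S hcard
      by_cases hnd : S.Nodup
      · set A := S.toFinset with hA
        have hAS : A.val = S := by rw [hA, Multiset.toFinset_val, Multiset.dedup_eq_self.mpr hnd]
        have hcardA : r + 1 ≤ A.card := by
          rw [Finset.card_def, hAS]; omega
        -- pigeonhole on subset sums
        have hlt : Fintype.card G < A.powerset.card := by
          rw [Finset.card_powerset, cardG]
          calc 2 ^ r < 2 ^ (r+1) := by
                have : 1 ≤ 2 ^ r := Nat.one_le_two_pow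
                rw [pow_succ]; omega
            _ ≤ 2 ^ A.card := Nat.pow_le_pow_right (by norm_num) hcardA
        obtain ⟨B₁, hB₁, B₂, hB₂, hne, heq⟩ :=
          Finset.exists_ne_map_eq_of_card_lt_of_maps_to
            (t := (Finset.univ : Finset G)) (by rw [Finset.card_univ]; exact hlt)
            (fun B _ => mem_univ (∑ x ∈ B, x))
        set C := (B₁ \ B₂) ∪ (B₂ \ B₁) with hCdef
        have hCsub : C ⊆ A := by
          intro x hx
          rcases Finset.mem_union.mp hx with h | h
          · exact (Finset.mem_powerset.mp hB₁) (Finset.mem_sdiff.mp h).1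
          · exact (Finset.mem_powerset.mp hB₂) (Finset.mem_sdiff.mp h).1
        have hCne : C.Nonempty := by
          rw [hCdef]
          by_contra h
          rw [Finset.not_nonempty_iff_eq_empty, Finset.union_eq_empty] at h
          exact hne (Finset.Subset.antisymm
            (Finset.sdiff_eq_empty_iff_subset.mp h.1)
            (Finset.sdiff_eq_empty_iff_subset.mp h.2))
        have hCsum : ∑ x ∈ C, x = 0 := by
          have h1 : ∑ x ∈ B₁ \ B₂, x + ∑ x ∈ B₁ ∩ B₂, x = ∑ x ∈ B₁, x := by
            rw [← Finset.sdiff_inter_self_left B₁ B₂]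
            exact Finset.sum_sdiff (Finset.inter_subset_left)
          have h2 : ∑ x ∈ B₂ \ B₁, x + ∑ x ∈ B₂ ∩ B₁, x = ∑ x ∈ B₂, x := by
            rw [← Finset.sdiff_inter_self_left B₂ B₁]
            exact Finset.sum_sdiff (Finset.inter_subset_left)
          have h3 : ∑ x ∈ C, x = ∑ x ∈ B₁ \ B₂, x + ∑ x ∈ B₂ \ B₁, x :=
            Finset.sum_union disjoint_sdiff_sdiff
          have h4 : B₂ ∩ B₁ = B₁ ∩ B₂ := Finset.inter_comm _ _
          rw [h4] at h2
          have h5 : ∑ x ∈ C, x + (∑ x ∈ B₁ ∩ B₂, x + ∑ x ∈ B₁ ∩ B₂, x)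
              = ∑ x ∈ B₁, x + ∑ x ∈ B₂, x := by
            rw [h3, ← h1, ← h2]; abel
          rw [addSelf, add_zero, ← heq, addSelf] at h5
          exact h5
        refine ⟨C.val, ?_, ?_, ?_⟩
        · rw [← hAS]
          exact Finset.val_le_iff.mpr hCsub
        · intro h
          rw [← Finset.card_pos, Finset.card_def, h] at hCne
          simp at hCne
        · rw [← hCsum, Finset.sum_eq_multiset_sum, Multiset.map_id']
      · -- not nodup: a repeated element gives {x, x}
        rw [Multiset.nodup_iff_count_le_one] at hnd
        push_neg at hnd
        obtain ⟨x, hx⟩ := hnd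
        refine ⟨Multiset.replicate 2 x, ?_, by simp [Multiset.replicate], ?_⟩
        · rw [Multiset.le_iff_count]
          intro a
          by_cases ha : a = x
          · subst ha; rw [Multiset.count_replicate_self]; omega
          · rw [Multiset.count_replicate, if_neg (fun hh => ha hh.symm)]; omega
        · rw [Multiset.sum_replicate, two_nsmul]; exact addSelf x
  rw [davenport, hset, csInf_Ici]

end Main

lemma arith (n : ℕ) (h : 3 ≤ n) : n + 5 ≤ 2 ^ n := by
  induction n, h using Nat.le_induction with
  | base => norm_num
  | succ n hn IH => rw [pow_succ]; omega

section Main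
variable (r : ℕ)
local notation "G" => (Fin r → ZMod 2)

lemma C0_eq (hr : 3 ≤ r) : C0 G = {2 ^ r - 3, 2 ^ r - 2} := by
  have harith := arith r hr
  ext t
  simp only [C0, Set.mem_setOf_eq, Set.mem_insert_iff, Set.mem_singleton_iff,
    davG r hr, etaG r hr]
  constructor
  · rintro ⟨h1, h2, h3⟩
    by_contra hne
    push_neg at hne
    obtain ⟨A, hA0, hAc, hAs⟩ := key r (by omega) (Fin r → ZMod 2) (finrankG r) t
      (Or.inr ⟨by omega, by omega, hne.2, hne.1⟩)
    have hsum : A.val.sum = 0 := by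
      have := hAs
      rw [Finset.sum_eq_multiset_sum, Multiset.map_id'] at this
      exact this
    have hshort := h3 A.val (by rw [← Finset.card_def, hAc]) hsum
    exact no_short r hr A.nodup (fun h => hA0 h) hshort
  · intro ht
    have hbounds : (r + 1) + 1 ≤ t ∧ t ≤ 2 ^ r - 1 := by rcases ht with rfl | rfl <;> omega
    refine ⟨hbounds.1, hbounds.2, ?_⟩
    intro S hcard hsum
    by_contra hshort
    have hnd : S.Nodup := by
      by_contra h
      exact hshort (short_of_not_nodup r hr h)
    have h0 : (0 : G) ∉ S := fun h => hshort (short_of_mem_zero r hr h)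
    set A := S.toFinset with hA
    have hAS : A.val = S := by rw [hA, Multiset.toFinset_val, Multiset.dedup_eq_self.mpr hnd]
    have hAc : A.card = t := by rw [Finset.card_def, hAS]; exact hcard
    have hAsub : A ⊆ Finset.univ.erase 0 := fun x hx =>
      Finset.mem_erase.mpr ⟨fun hh => h0 (hh ▸ Multiset.mem_toFinset.mp hx), mem_univ _⟩
    have hAsum : ∑ x ∈ A, x = 0 := by
      rw [Finset.sum_eq_multiset_sum, Multiset.map_id', hAS]; exact hsum
    set B := (Finset.univ.erase (0 : G)) \ A with hB
    have hBc : B.card = 2 ^ r - 1 - t := by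
      rw [hB, Finset.card_sdiff_of_subset hAsub, Finset.card_erase_of_mem (mem_univ _),
        Finset.card_univ, cardG, hAc]
    have hBsum : ∑ x ∈ B, x = 0 := by
      have h1 := Finset.sum_sdiff (f := fun x : G => x) hAsub
      have h2 : ∑ x ∈ Finset.univ.erase (0 : G), x = 0 := by
        have h3 := Finset.add_sum_erase Finset.univ (fun x : G => x) (mem_univ 0)
        rw [sum_univ_V (Fin r → ZMod 2) (by rw [finrankG]; omega)] at h3
        simpa using h3
      rw [hAsum, add_zero] at h1
      rw [← hB] at h1
      rw [h1]
      exact h2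
    have hBne : ∀ x ∈ B, x ≠ (0 : G) := fun x hx =>
      (Finset.mem_erase.mp (Finset.mem_sdiff.mp hx).1).1
    rcases ht with rfl | rfl
    · have hc2 : B.card = 2 := by rw [hBc]; omega
      obtain ⟨x, y, hxy, hBeq⟩ := Finset.card_eq_two.mp hc2
      rw [hBeq, Finset.sum_pair hxy] at hBsum
      apply hxy
      have : y = -x := eq_neg_of_add_eq_zero_right hBsum
      rw [this, negEq]
    · have hc1 : B.card = 1 := by rw [hBc]; omega
      obtain ⟨x, hBeq⟩ := Finset.card_eq_one.mp hc1
      rw [hBeq, Finset.sum_singleton] at hBsum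
      exact hBne x (by rw [hBeq]; exact Finset.mem_singleton_self x) hBsum

end Main


theorem stmt_10 (r : ℕ) (hr : 3 ≤ r) :
    C0 (Fin r → ZMod 2) = {etaConst (Fin r → ZMod 2) - 3, etaConst (Fin r → ZMod 2) - 2} ∧
    C0 (Fin r → ZMod 2) = {2 ^ r - 3, 2 ^ r - 2} := by

  have h := C0_eq r hr
  constructor
  · rw [etaG r hr]
    exact h
  · exact h
end

section
/- Let r be a positive integer, let G_1 = C_{n1}^r, G_2 = C_{n2}^r and G = C_{n1 n2}^r. Suppose that (i) (η(G_1) - 1)/(n1 - 1) = (η(G_2) - 1)/(n2 - 1) = (η(G) - 1)/(n1 n2 - 1) = c for some positive integer c; (ii) G_2 has Property C; and (iii) there exist t1 ∈ [1, n2 - 1] and t2 ∈ {1, 2} with t2 ≤ t1 such that every integer in [η(G_2) - t1, η(G_2) - t2] belongs to C_0(G_2). Then every integer in [η(G) - t1, η(G) - t2] belongs to C_0(G). -/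
/-- The group `C_n^r` has Property C: `η(C_n^r) = c(n-1) + 1` for some positive `c`, and
every sequence of length `c(n-1)` over `C_n^r` with no short zero-sum subsequence is of the
form `∏ᵢ gᵢ^{n-1}` with `g₁, …, g_c` pairwise distinct. -/
def PropertyC (n r : ℕ) : Prop :=
  ∃ c : ℕ, 0 < c ∧ etaConst (Fin r → ZMod n) = c * (n - 1) + 1 ∧
    ∀ S : Multiset (Fin r → ZMod n), Multiset.card S = c * (n - 1) →
      ¬ HasShortZeroSumSubseq S →
      ∃ g : Fin c → (Fin r → ZMod n), Function.Injective g ∧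
        S = ∑ i : Fin c, Multiset.replicate (n - 1) (g i)




open Multiset



section Stmt14Aux



lemma exp_pi (n r : ℕ) (hr : 0 < r) : AddMonoid.exponent (Fin r → ZMod n) = n := by

  rw [AddMonoid.exponent_pi]

  simp only [ZMod.exponent]

  apply Nat.dvd_antisymm

  · exact Finset.lcm_dvd fun i _ => dvd_rfl

  · exact Finset.dvd_lcm (Finset.mem_univ ⟨0, hr⟩)



lemma nsmul_zmod_pi (n r : ℕ) (x : Fin r → ZMod n) : n • x = 0 := by

  funext i

  show n • (x i) = 0

  rw [nsmul_eq_mul]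

  simp [ZMod.natCast_self]



lemma exists_of_le_map' {α β : Type*} [DecidableEq α] [DecidableEq β] {f : α → β} :

    ∀ (T : Multiset β) (s : Multiset α), T ≤ s.map f → ∃ t, t ≤ s ∧ t.map f = T := by

  intro T

  induction T using Multiset.induction with

  | empty => exact fun s _ => ⟨0, Multiset.zero_le _, rfl⟩

  | cons b T ih =>

    intro s h

    have hb : b ∈ s.map f := mem_of_le h (mem_cons_self _ _)

    obtain ⟨a, ha, rfl⟩ := mem_map.1 hb

    have hs : s = a ::ₘ s.erase a := (cons_erase ha).symm

    have h2 : f a ::ₘ T ≤ f a ::ₘ (s.erase a).map f := by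

      rwa [hs, map_cons] at h

    obtain ⟨t, ht, htm⟩ := ih (s.erase a) ((cons_le_cons_iff _).1 h2)

    exact ⟨a ::ₘ t, by rw [hs]; exact cons_le_cons _ ht, by rw [map_cons, htm]⟩



lemma le_cons_split' {β : Type*} [DecidableEq β] {Z A : Multiset β} {a : β}

    (h : Z ≤ a ::ₘ A) : Z ≤ A ∨ (a ∈ Z ∧ Z.erase a ≤ A) := by

  by_cases ha : a ∈ Z

  · right

    refine ⟨ha, ?_⟩

    have : a ::ₘ Z.erase a ≤ a ::ₘ A := by rwa [cons_erase ha]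

    exact (cons_le_cons_iff _).1 this

  · left

    rw [le_iff_count] at h ⊢

    intro x

    have := h x

    rcases eq_or_ne x a with rfl | hne

    · have : count x Z = 0 := count_eq_zero_of_notMem ha

      omega

    · rwa [count_cons_of_ne hne] at this



lemma le_join_of_mem' {α : Type*} {W : Multiset α} {B : Multiset (Multiset α)}

    (h : W ∈ B) : W ≤ B.join := by

  classical

  have : B = W ::ₘ B.erase W := (cons_erase h).symm

  rw [this, join_cons]

  exact le_add_right _ _



lemma join_le_join' {α : Type*} {B B' : Multiset (Multiset α)} (h : B' ≤ B) :

    B'.join ≤ B.join := by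

  obtain ⟨C, rfl⟩ := Multiset.le_iff_exists_add.1 h

  rw [join_add]

  exact le_add_right _ _



lemma join_sum' {α : Type*} [AddCommMonoid α] (B : Multiset (Multiset α)) :

    B.join.sum = (B.map Multiset.sum).sum := by

  induction B using Multiset.induction with

  | empty => simp

  | cons W B ih => simp [join_cons, sum_cons, ih]



lemma eta_spec' {G : Type*} [AddCommGroup G] {v : ℕ} (h : etaConst G = v) (hv : 0 < v) :

    ∀ S : Multiset G, v ≤ Multiset.card S → HasShortZeroSumSubseq S := by

  have hne : {d : ℕ | ∀ S : Multiset G, d ≤ Multiset.card S → HasShortZeroSumSubseq S}.Nonempty := by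

    by_contra hne

    rw [Set.not_nonempty_iff_eq_empty] at hne

    rw [etaConst, hne, Nat.sInf_empty] at h

    omega

  have hmem := Nat.sInf_mem hne

  rw [etaConst] at h

  rw [h] at hmem

  exact hmem



lemma blocks_combine' {GN Ga Gb : Type*} [AddCommGroup GN] [AddCommGroup Ga] [AddCommGroup Gb]

    [DecidableEq GN] [DecidableEq Ga]

    (π : GN →+ Gb) (ρ : Ga →+ GN) (δ : GN → Ga) (sect : ∀ x, π x = 0 → ρ (δ x) = x)

    (b : ℕ) (B : Multiset (Multiset GN))

    (hB : ∀ W ∈ B, W ≠ 0 ∧ Multiset.card W ≤ b ∧ (W.map π).sum = 0)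

    (T : Multiset Ga) (hT : T ≤ B.map (fun W => δ W.sum)) (hTne : T ≠ 0) (hTsum : T.sum = 0) :

    ∃ U, U ≤ B.join ∧ U ≠ 0 ∧ Multiset.card U ≤ Multiset.card T * b ∧ U.sum = 0 := by

  classical

  obtain ⟨B', hB'le, hB'map⟩ := exists_of_le_map' T B hT

  have hmem : ∀ W ∈ B', W ≠ 0 ∧ Multiset.card W ≤ b ∧ (W.map π).sum = 0 :=

    fun W hW => hB W (mem_of_le hB'le hW)

  refine ⟨B'.join, join_le_join' hB'le, ?_, ?_, ?_⟩

  · have hB'ne : B' ≠ 0 := by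

      rintro rfl

      exact hTne (by simpa using hB'map.symm)

    obtain ⟨W, hW⟩ := exists_mem_of_ne_zero hB'ne

    intro h0

    have := le_join_of_mem' hW

    rw [h0, Multiset.le_zero] at this

    exact (hmem W hW).1 this

  · rw [card_join]

    have h1 : (B'.map Multiset.card).sum ≤ Multiset.card (B'.map Multiset.card) • b := by

      apply sum_le_card_nsmul

      intro x hx

      obtain ⟨W, hW, rfl⟩ := mem_map.1 hx

      exact (hmem W hW).2.1

    have h2 : Multiset.card T = Multiset.card B' := by

      rw [← hB'map, card_map]

    simpa [h2, smul_eq_mul] using h1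

  · rw [join_sum']

    have hcong : B'.map Multiset.sum = (B'.map fun W => δ W.sum).map ρ := by

      rw [map_map]

      apply map_congr rfl

      intro W hW

      have hz : π W.sum = 0 := by

        rw [map_multiset_sum]

        exact (hmem W hW).2.2

      exact (sect _ hz).symm

    rw [hcong, hB'map, ← map_multiset_sum, hTsum]

    exact map_zero ρ



def piProj (r b N : ℕ) (h : b ∣ N) : (Fin r → ZMod N) →+ (Fin r → ZMod b) where

  toFun x := fun i => ZMod.castHom h (ZMod b) (x i)

  map_zero' := by funext i; simp

  map_add' x y := funext fun i => map_add (ZMod.castHom h (ZMod b)) _ _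



noncomputable def zrhoF (a b N : ℕ) (h : a * b = N) : { f : ℤ →+ ZMod N // f (a : ℕ) = 0 } :=

  ⟨{  toFun := fun z => ((b * z : ℤ) : ZMod N)

      map_zero' := by simp

      map_add' := by intro u v; push_cast; ring }, by

    show ((b * (a:ℤ) : ℤ) : ZMod N) = 0

    have : ((b * (a:ℤ) : ℤ) : ZMod N) = ((N : ℕ) : ZMod N) := by

      rw [← h]; push_cast; ring

    rw [this, ZMod.natCast_self]⟩



noncomputable def zrho (a b N : ℕ) (h : a * b = N) : ZMod a →+ ZMod N :=

  ZMod.lift a (zrhoF a b N h)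



noncomputable def piRho (r a b N : ℕ) (h : a * b = N) :

    (Fin r → ZMod a) →+ (Fin r → ZMod N) where

  toFun y := fun i => zrho a b N h (y i)

  map_zero' := by funext i; simp

  map_add' x y := funext fun i => map_add (zrho a b N h) _ _



def piDelta (r a b N : ℕ) : (Fin r → ZMod N) → (Fin r → ZMod a) :=

  fun x i => (((x i).val / b : ℕ) : ZMod a)



lemma zrho_intCast (a b N : ℕ) (h : a * b = N) (z : ℤ) :

    zrho a b N h ((z : ℤ) : ZMod a) = ((b * z : ℤ) : ZMod N) :=

  congrFun (ZMod.lift_comp_coe (n := a) (f := zrhoF a b N h)) z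



lemma zrho_natCast (a b N : ℕ) (h : a * b = N) (q : ℕ) :

    zrho a b N h ((q : ℕ) : ZMod a) = ((b * q : ℕ) : ZMod N) := by

  have h1 : ((q : ℕ) : ZMod a) = ((q : ℤ) : ZMod a) := by push_cast; rfl

  have h2 : ((b * q : ℕ) : ZMod N) = ((b * (q:ℤ) : ℤ) : ZMod N) := by push_cast; rfl

  rw [h1, h2, zrho_intCast]



lemma pi_section (r a b N : ℕ) (ha : 0 < a) (hb : 0 < b) (h : a * b = N)

    (x : Fin r → ZMod N) (hx : piProj r b N ⟨a, by rw [← h]; ring⟩ x = 0) :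

    piRho r a b N h (piDelta r a b N x) = x := by

  have hN : 0 < N := h ▸ Nat.mul_pos ha hb

  haveI : NeZero N := ⟨by omega⟩

  haveI : NeZero b := ⟨by omega⟩

  funext i

  have hxi : ((x i).val : ZMod b) = 0 := by

    have := congrFun hx i

    simpa [piProj, ZMod.natCast_val] using this

  have hdvd : b ∣ (x i).val := (ZMod.natCast_eq_zero_iff _ _).1 hxi

  obtain ⟨q, hq⟩ := hdvd

  show zrho a b N h (piDelta r a b N x i) = x i

  rw [piDelta]

  simp only [hq, Nat.mul_div_cancel_left _ hb]

  rw [zrho_natCast, ← hq]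

  rw [ZMod.natCast_val, ZMod.cast_id]



lemma count_PC_zero {G2 : Type*} [DecidableEq G2] {A : Multiset G2} {n2 cc : ℕ}

    (g : Fin cc → G2)

    (hA : A = ∑ i : Fin cc, Multiset.replicate (n2 - 1) (g i)) :

    ∀ v, (∀ i, g i ≠ v) → count v A = 0 := by

  intro v hv

  rw [hA, Multiset.count_sum']

  apply Finset.sum_eq_zero

  intro j _

  apply count_eq_zero_of_notMem

  intro hmem

  exact hv j (eq_of_mem_replicate hmem).symm



lemma count_PC_val {G2 : Type*} [DecidableEq G2] {A : Multiset G2} {n2 cc : ℕ}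

    (g : Fin cc → G2) (hginj : Function.Injective g)

    (hA : A = ∑ i : Fin cc, Multiset.replicate (n2 - 1) (g i)) :

    ∀ i, count (g i) A = n2 - 1 := by

  intro i

  rw [hA, Multiset.count_sum']

  rw [Finset.sum_eq_single i]

  · exact count_replicate_self _ _

  · intro j _ hji

    apply count_eq_zero_of_notMem

    intro hmem

    exact hji ((hginj (eq_of_mem_replicate hmem)).symm)

  · intro hi

    exact absurd (Finset.mem_univ i) hi



lemma count_PC_cases {G2 : Type*} [DecidableEq G2] {A : Multiset G2} {n2 cc : ℕ}

    (g : Fin cc → G2) (hginj : Function.Injective g)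

    (hA : A = ∑ i : Fin cc, Multiset.replicate (n2 - 1) (g i)) :

    ∀ v, count v A = 0 ∨ count v A = n2 - 1 := by

  intro v

  rcases Classical.em (∃ i, g i = v) with ⟨i, rfl⟩ | hne

  · exact Or.inr (count_PC_val g hginj hA i)

  · exact Or.inl (count_PC_zero g hA v (fun i hi => hne ⟨i, hi⟩))



end Stmt14Aux

set_option maxHeartbeats 1000000 in
theorem stmt_14 (r n1 n2 : ℕ) (hr : 0 < r) (hn1 : 0 < n1) (hn2 : 0 < n2)
    (c : ℕ) (hc : 0 < c)
    (h1 : etaConst (Fin r → ZMod n1) = c * (n1 - 1) + 1)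
    (h2 : etaConst (Fin r → ZMod n2) = c * (n2 - 1) + 1)
    (h3 : etaConst (Fin r → ZMod (n1 * n2)) = c * (n1 * n2 - 1) + 1)
    (hPC : PropertyC n2 r)
    (t1 t2 : ℕ) (ht1 : 1 ≤ t1 ∧ t1 ≤ n2 - 1) (ht2 : t2 = 1 ∨ t2 = 2) (ht21 : t2 ≤ t1)
    (hsub : ∀ t ∈ Set.Icc (etaConst (Fin r → ZMod n2) - t1) (etaConst (Fin r → ZMod n2) - t2),
      t ∈ C0 (Fin r → ZMod n2)) :
    ∀ t ∈ Set.Icc (etaConst (Fin r → ZMod (n1 * n2)) - t1)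
        (etaConst (Fin r → ZMod (n1 * n2)) - t2),
      t ∈ C0 (Fin r → ZMod (n1 * n2)) := by
  classical
  obtain ⟨ht1a, ht1b⟩ := ht1
  have hn2ge : 2 ≤ n2 := by omega
  have ht2ge : 1 ≤ t2 := by rcases ht2 with rfl | rfl <;> omega
  -- exponents
  have hexpG : AddMonoid.exponent (Fin r → ZMod (n1 * n2)) = n1 * n2 := exp_pi _ r hr
  have hexp1 : AddMonoid.exponent (Fin r → ZMod n1) = n1 := exp_pi _ r hr
  have hexp2 : AddMonoid.exponent (Fin r → ZMod n2) = n2 := exp_pi _ r hr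
  -- eta specs
  have hη1 := eta_spec' h1 (by omega)
  have hη2 := eta_spec' h2 (by omega)
  -- projections and sections
  set π₂ : (Fin r → ZMod (n1 * n2)) →+ (Fin r → ZMod n2) :=
    piProj r n2 (n1 * n2) ⟨n1, mul_comm n1 n2⟩ with hπ₂def
  set π₁ : (Fin r → ZMod (n1 * n2)) →+ (Fin r → ZMod n1) :=
    piProj r n1 (n1 * n2) ⟨n2, rfl⟩ with hπ₁def
  have sect₂ : ∀ x, π₂ x = 0 →
      piRho r n1 n2 (n1 * n2) rfl (piDelta r n1 n2 (n1 * n2) x) = x :=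
    fun x hx => pi_section r n1 n2 (n1 * n2) hn1 hn2 rfl x hx
  have sect₁ : ∀ x, π₁ x = 0 →
      piRho r n2 n1 (n1 * n2) (mul_comm n2 n1) (piDelta r n2 n1 (n1 * n2) x) = x :=
    fun x hx => pi_section r n2 n1 (n1 * n2) hn2 hn1 (mul_comm n2 n1) x hx
  -- abbreviations for the arithmetic atoms
  set P1 := c * (n1 - 1) with hP1
  set P2 := c * (n2 - 1) with hP2
  set K := P1 * n2 with hK
  set M := n1 * P2 with hM
  set E := c * (n1 * n2 - 1) with hE0
  -- arithmetic identities
  have idKE : E = K + P2 := by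
    rw [hE0, hK, hP1, hP2]
    obtain ⟨a, rfl⟩ : ∃ a, n1 = a + 1 := ⟨n1 - 1, by omega⟩
    obtain ⟨b, rfl⟩ : ∃ b, n2 = b + 1 := ⟨n2 - 1, by omega⟩
    simp only [Nat.add_sub_cancel]
    have hx : (a + 1) * (b + 1) - 1 = a * b + a + b := by
      have : (a + 1) * (b + 1) = a * b + a + b + 1 := by ring
      omega
    rw [hx]; ring
  have idME : E = P1 + M := by
    rw [hE0, hM, hP1, hP2]
    obtain ⟨a, rfl⟩ : ∃ a, n1 = a + 1 := ⟨n1 - 1, by omega⟩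
    obtain ⟨b, rfl⟩ : ∃ b, n2 = b + 1 := ⟨n2 - 1, by omega⟩
    simp only [Nat.add_sub_cancel]
    have hx : (a + 1) * (b + 1) - 1 = a * b + a + b := by
      have : (a + 1) * (b + 1) = a * b + a + b + 1 := by ring
      omega
    rw [hx]; ring
  clear_value P1 P2 K M E
  have hP2ge : n2 - 1 ≤ P2 := by rw [hP2]; exact Nat.le_mul_of_pos_left _ hc
  have hP1ge : n1 - 1 ≤ P1 := by rw [hP1]; exact Nat.le_mul_of_pos_left _ hc
  -- Davenport constant of G2
  have hD2ne : {d : ℕ | ∀ S : Multiset (Fin r → ZMod n2), d ≤ Multiset.card S →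
      ∃ T, T ≤ S ∧ T ≠ 0 ∧ T.sum = 0}.Nonempty := by
    refine ⟨P2 + 1, fun S hS => ?_⟩
    obtain ⟨T, hTle, hTsum, hT1, _⟩ := hη2 S hS
    exact ⟨T, hTle, by rw [← Multiset.card_pos] at *; omega, hTsum⟩
  have hD2mem : ∀ S : Multiset (Fin r → ZMod n2), davenport (Fin r → ZMod n2) ≤ Multiset.card S →
      ∃ T, T ≤ S ∧ T ≠ 0 ∧ T.sum = 0 := Nat.sInf_mem hD2ne
  set D2 := davenport (Fin r → ZMod n2) with hD2
  have hD2pos : 1 ≤ D2 := by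
    by_contra h'
    obtain ⟨T, hTle, hTne, _⟩ := hD2mem 0 (by simp; omega)
    rw [Multiset.le_zero] at hTle
    exact hTne hTle
  have hC0t1 := hsub (etaConst (Fin r → ZMod n2) - t1)
    ⟨le_rfl, Nat.sub_le_sub_left ht21 _⟩
  have hD2b : D2 + 1 + t1 ≤ P2 + 1 := by
    have := hC0t1.1
    rw [h2] at this
    omega
  intro t ht
  obtain ⟨htl, htu⟩ := ht
  rw [h3] at htl htu
  refine ⟨?_, ?_, ?_⟩
  · -- davenport G + 1 ≤ t
    have hdavmem : ∀ S' : Multiset (Fin r → ZMod (n1 * n2)),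
        P1 + 1 + n1 * (D2 - 1) ≤ Multiset.card S' → ∃ T, T ≤ S' ∧ T ≠ 0 ∧ T.sum = 0 := by
      intro S' hS'
      set PP : ℕ → Prop := fun k => ∃ B : Multiset (Multiset (Fin r → ZMod (n1 * n2))),
        ((∀ W ∈ B, W ≠ 0 ∧ Multiset.card W ≤ n1 ∧ (W.map ⇑π₁).sum = 0) ∧ B.join ≤ S')
        ∧ Multiset.card B.join = k with hPP
      have hP0 : PP 0 := ⟨0, ⟨fun W hW => absurd hW (Multiset.notMem_zero W),
        by simp [Multiset.join_zero]⟩, by simp [Multiset.join_zero]⟩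
      have hPk : PP (Nat.findGreatest PP (Multiset.card S')) :=
        Nat.findGreatest_spec (Nat.zero_le _) hP0
      obtain ⟨B, ⟨hBW, hBle⟩, hkeq⟩ := hPk
      by_cases hD : D2 ≤ Multiset.card B
      · have hc2 : D2 ≤ Multiset.card (B.map fun W => piDelta r n2 n1 (n1 * n2) W.sum) := by
          rw [Multiset.card_map]; exact hD
        obtain ⟨T, hTle, hTne, hTsum⟩ := hD2mem _ hc2
        obtain ⟨U, hU1, hU2, _, hU4⟩ := blocks_combine' π₁
          (piRho r n2 n1 (n1 * n2) (mul_comm n2 n1)) (piDelta r n2 n1 (n1 * n2)) sect₁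
          n1 B hBW T hTle hTne hTsum
        exact ⟨U, le_trans hU1 hBle, hU2, hU4⟩
      · exfalso
        have hjb : Multiset.card B.join ≤ (D2 - 1) * n1 := by
          rw [Multiset.card_join]
          have hb1 := Multiset.sum_le_card_nsmul (B.map Multiset.card) n1 (by
            intro x hx
            obtain ⟨W, hW, rfl⟩ := Multiset.mem_map.1 hx
            exact (hBW W hW).2.1)
          rw [Multiset.card_map, smul_eq_mul] at hb1
          exact le_trans hb1 (Nat.mul_le_mul_right _ (by omega))
        have hcm : (D2 - 1) * n1 = n1 * (D2 - 1) := Nat.mul_comm _ _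
        have hRj : (S' - B.join) + B.join = S' := tsub_add_cancel_of_le hBle
        have hcards : Multiset.card (S' - B.join) + Multiset.card B.join
            = Multiset.card S' := by rw [← Multiset.card_add, hRj]
        obtain ⟨Z, hZle, hZsum, hZ1, hZ2⟩ := hη1 ((S' - B.join).map ⇑π₁) (by
          rw [Multiset.card_map]; omega)
        rw [hexp1] at hZ2
        obtain ⟨U, hUle, hUmap⟩ := exists_of_le_map' Z _ hZle
        have hUcard : Multiset.card U = Multiset.card Z := by rw [← hUmap, Multiset.card_map]
        have hUne : U ≠ 0 := by
          intro h0
          rw [h0] at hUcard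
          simp at hUcard
          omega
        have hjle : (U ::ₘ B).join ≤ S' := by
          rw [Multiset.join_cons]
          calc U + B.join ≤ (S' - B.join) + B.join := add_le_add_left hUle _
            _ = S' := hRj
        have hP' : PP (Multiset.card (U ::ₘ B).join) := by
          refine ⟨U ::ₘ B, ⟨?_, hjle⟩, rfl⟩
          intro W hW
          rcases Multiset.mem_cons.1 hW with rfl | hW'
          · exact ⟨hUne, by omega, by rw [hUmap]; exact hZsum⟩
          · exact hBW W hW'
        have hble : Multiset.card (U ::ₘ B).join ≤ Multiset.card S' :=
          Multiset.card_le_card hjle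
        have := Nat.le_findGreatest hble hP'
        rw [Multiset.join_cons, Multiset.card_add] at this
        omega
    have hdavle : davenport (Fin r → ZMod (n1 * n2)) ≤ P1 + 1 + n1 * (D2 - 1) :=
      Nat.sInf_le hdavmem
    have hQrel : n1 * (D2 - 1) + n1 * (t1 + 1) ≤ M := by
      rw [hM, ← Nat.mul_add]
      exact Nat.mul_le_mul_left _ (by omega)
    have hM1 : t1 + 1 ≤ n1 * (t1 + 1) := Nat.le_mul_of_pos_left _ hn1
    omega
  · -- t ≤ η(G) - 1
    rw [h3]
    omega
  · -- zero-sum sequences of length t have short zero-sum subsequences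
    intro S hcardS hsumS
    by_contra hns
    -- Fact 1 : every valid decomposition has at most c(n1-1) blocks
    have fact1 : ∀ B : Multiset (Multiset (Fin r → ZMod (n1 * n2))),
        (∀ W ∈ B, W ≠ 0 ∧ Multiset.card W ≤ n2 ∧ (W.map ⇑π₂).sum = 0) → B.join ≤ S →
        Multiset.card B ≤ P1 := by
      intro B hBW hBle
      by_contra hgt
      push_neg at hgt
      have hcM : P1 + 1 ≤ Multiset.card (B.map fun W => piDelta r n1 n2 (n1 * n2) W.sum) := by
        rw [Multiset.card_map]; omega
      obtain ⟨T, hTle, hTsum, hT1, hT2⟩ := hη1 _ hcM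
      rw [hexp1] at hT2
      have hTne : T ≠ 0 := by
        intro h0; rw [h0] at hT1; simp at hT1
      obtain ⟨U, hUle, hUne, hUcard, hUsum⟩ := blocks_combine' π₂
        (piRho r n1 n2 (n1 * n2) rfl) (piDelta r n1 n2 (n1 * n2)) sect₂
        n2 B hBW T hTle hTne hTsum
      apply hns
      refine ⟨U, le_trans hUle hBle, hUsum, Multiset.card_pos.2 hUne, ?_⟩
      rw [hexpG]
      calc Multiset.card U ≤ Multiset.card T * n2 := hUcard
        _ ≤ n1 * n2 := Nat.mul_le_mul_right _ hT2
    -- Extension of a valid decomposition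
    have extend : ∀ B : Multiset (Multiset (Fin r → ZMod (n1 * n2))),
        (∀ W ∈ B, W ≠ 0 ∧ Multiset.card W ≤ n2 ∧ (W.map ⇑π₂).sum = 0) → B.join ≤ S →
        HasShortZeroSumSubseq ((S - B.join).map ⇑π₂) →
        ∃ B₂ : Multiset (Multiset (Fin r → ZMod (n1 * n2))),
          (∀ W ∈ B₂, W ≠ 0 ∧ Multiset.card W ≤ n2 ∧ (W.map ⇑π₂).sum = 0) ∧ B₂.join ≤ S ∧
          Multiset.card B₂ = Multiset.card B + 1 ∧
          Multiset.card B.join + 1 ≤ Multiset.card B₂.join ∧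
          Multiset.card B₂.join ≤ Multiset.card S := by
      intro B hBW hBle hsh
      obtain ⟨Z, hZle, hZsum, hZ1, hZ2⟩ := hsh
      rw [hexp2] at hZ2
      obtain ⟨U, hUle, hUmap⟩ := exists_of_le_map' Z _ hZle
      have hUcard : Multiset.card U = Multiset.card Z := by rw [← hUmap, Multiset.card_map]
      have hUne : U ≠ 0 := by
        intro h0; rw [h0] at hUcard; simp at hUcard; omega
      have hjle : (U ::ₘ B).join ≤ S := by
        rw [Multiset.join_cons]
        calc U + B.join ≤ (S - B.join) + B.join := add_le_add_left hUle _
          _ = S := tsub_add_cancel_of_le hBle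
      refine ⟨U ::ₘ B, ?_, hjle, by rw [Multiset.card_cons], ?_, Multiset.card_le_card hjle⟩
      · intro W hW
        rcases Multiset.mem_cons.1 hW with rfl | hW'
        · exact ⟨hUne, by omega, by rw [hUmap]; exact hZsum⟩
        · exact hBW W hW'
      · rw [Multiset.join_cons, Multiset.card_add]; omega
    -- maximal decomposition
    set PP : ℕ → Prop := fun k => ∃ B : Multiset (Multiset (Fin r → ZMod (n1 * n2))),
      ((∀ W ∈ B, W ≠ 0 ∧ Multiset.card W ≤ n2 ∧ (W.map ⇑π₂).sum = 0) ∧ B.join ≤ S)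
      ∧ Multiset.card B.join = k with hPP
    have hP0 : PP 0 := ⟨0, ⟨fun W hW => absurd hW (Multiset.notMem_zero W),
      by simp [Multiset.join_zero]⟩, by simp [Multiset.join_zero]⟩
    have hPk : PP (Nat.findGreatest PP (Multiset.card S)) :=
      Nat.findGreatest_spec (Nat.zero_le _) hP0
    obtain ⟨Bm, ⟨hBW, hBle⟩, hkeq⟩ := hPk
    have hmax : ∀ kk, PP kk → kk ≤ Multiset.card S →
        kk ≤ Multiset.card Bm.join := by
      intro kk h hb
      rw [hkeq]
      exact Nat.le_findGreatest hb h
    set R := S - Bm.join with hRdef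
    have hRj : R + Bm.join = S := tsub_add_cancel_of_le hBle
    have hcards : Multiset.card R + Multiset.card Bm.join = Multiset.card S := by
      rw [← Multiset.card_add, hRj]
    have noshort : ¬ HasShortZeroSumSubseq (R.map ⇑π₂) := by
      intro hsh
      rw [hRdef] at hsh
      obtain ⟨B₂, hW₂, hle₂, _, hgt₂, hb₂⟩ := extend Bm hBW hBle hsh
      have := hmax _ ⟨B₂, ⟨hW₂, hle₂⟩, rfl⟩ hb₂
      omega
    -- the projected remainder is zero-sum
    have hA0 : ((R.map ⇑π₂)).sum = 0 := by
      have h1' : R.sum + Bm.join.sum = S.sum := by rw [← Multiset.sum_add, hRj]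
      have h2' : π₂ Bm.join.sum = 0 := by
        rw [join_sum', map_multiset_sum, Multiset.map_map]
        apply Multiset.sum_eq_zero
        intro x hx
        obtain ⟨W, hW, rfl⟩ := Multiset.mem_map.1 hx
        show π₂ W.sum = 0
        rw [map_multiset_sum]
        exact (hBW W hW).2.2
      have h3' : π₂ R.sum = 0 := by
        have := congrArg (⇑π₂) h1'
        rw [_root_.map_add, hsumS, _root_.map_zero, h2', add_zero] at this
        exact this
      rw [← map_multiset_sum]
      exact h3'
    have hLle : Multiset.card R ≤ P2 := by
      by_contra h'
      exact noshort (hη2 _ (by rw [Multiset.card_map]; omega))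
    have hkb1 : Multiset.card Bm.join ≤ Multiset.card Bm * n2 := by
      rw [Multiset.card_join]
      have hb1 := Multiset.sum_le_card_nsmul (Bm.map Multiset.card) n2 (by
        intro x hx
        obtain ⟨W, hW, rfl⟩ := Multiset.mem_map.1 hx
        exact (hBW W hW).2.1)
      rwa [Multiset.card_map, smul_eq_mul] at hb1
    have hm1 : Multiset.card Bm ≤ P1 := fact1 Bm hBW hBle
    have hkb : Multiset.card Bm.join ≤ K := by
      rw [hK]
      exact le_trans hkb1 (Nat.mul_le_mul_right _ hm1)
    have hLge : P2 + 1 ≤ Multiset.card R + ((E + 1) - t) := by omega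
    have hwin : ¬ (Multiset.card R + t2 ≤ P2 + 1) := by
      intro hL
      apply noshort
      apply (hsub (Multiset.card R) ⟨by rw [h2]; omega, by rw [h2]; omega⟩).2.2
        (R.map ⇑π₂) (Multiset.card_map _ _) hA0
    rcases ht2 with rfl | rfl
    · omega
    · -- t2 = 2
      have hs2 : 2 ≤ (E + 1) - t := by omega
      have hLeq : Multiset.card R = P2 := by omega
      set m := Multiset.card Bm with hmdef
      have hkjoin : Multiset.card Bm.join + ((E + 1) - t) = K + 1 := by omega
      have hm : m = P1 := by
        by_contra h'
        have hlt : m + 1 ≤ P1 := by omega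
        have h6 : (m + 1) * n2 ≤ P1 * n2 := Nat.mul_le_mul_right _ hlt
        have h7 : m * n2 + n2 = (m + 1) * n2 := by ring
        omega
      have hmK : m * n2 = K := by rw [hm, hK]
      have hdef : ∃ W ∈ Bm, Multiset.card W < n2 := by
        by_contra h'
        push_neg at h'
        have hrep : Bm.map Multiset.card = Multiset.replicate m n2 := by
          apply Multiset.eq_replicate.2
          refine ⟨Multiset.card_map _ _, ?_⟩
          intro b hb
          obtain ⟨W, hW, rfl⟩ := Multiset.mem_map.1 hb
          exact le_antisymm (hBW W hW).2.1 (h' W hW)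
        have h8 : Multiset.card Bm.join = m * n2 := by
          rw [Multiset.card_join, hrep, Multiset.sum_replicate, smul_eq_mul]
        omega
      obtain ⟨W, hWmem, hWlt⟩ := hdef
      have hm1' : 1 ≤ m := by
        rw [hmdef]
        exact Multiset.card_pos.2 (fun h0 => by rw [h0] at hWmem; exact Multiset.notMem_zero W hWmem)
      have hBmW : Bm = W ::ₘ Bm.erase W := (Multiset.cons_erase hWmem).symm
      have hjoinW : Bm.join = W + (Bm.erase W).join := by
        nth_rewrite 1 [hBmW]
        rw [Multiset.join_cons]
      set k2 := Multiset.card (Bm.erase W).join with hk2def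
      have hksplit : Multiset.card Bm.join = Multiset.card W + k2 := by
        rw [hjoinW, Multiset.card_add]
      have hmerase : Multiset.card (Bm.erase W) = m - 1 := by
        rw [hmdef]
        exact Multiset.card_erase_of_mem hWmem
      have hk2b : k2 ≤ (m - 1) * n2 := by
        rw [hk2def, Multiset.card_join]
        have hb1 := Multiset.sum_le_card_nsmul ((Bm.erase W).map Multiset.card) n2 (by
          intro x hx
          obtain ⟨W', hW', rfl⟩ := Multiset.mem_map.1 hx
          exact (hBW W' (Multiset.mem_of_mem_erase hW')).2.1)
        rw [Multiset.card_map, smul_eq_mul, hmerase] at hb1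
        exact hb1
      have h5 : (m - 1) * n2 + n2 = m * n2 := by
        calc (m - 1) * n2 + n2 = ((m - 1) + 1) * n2 := by ring
          _ = m * n2 := by rw [Nat.sub_add_cancel hm1']
      have hWge : n2 + 1 ≤ Multiset.card W + ((E + 1) - t) := by omega
      have hW2 : 2 ≤ Multiset.card W := by omega
      have hS' : S = (W + R) + (Bm.erase W).join := by
        rw [← hRj, hjoinW, ← add_assoc, add_comm R W]
      have mkB : ∀ U : Multiset (Fin r → ZMod (n1 * n2)), U ≠ 0 → Multiset.card U ≤ n2 →
          (U.map ⇑π₂).sum = 0 → U ≤ W + R →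
          ((∀ W' ∈ (U ::ₘ Bm.erase W), W' ≠ 0 ∧ Multiset.card W' ≤ n2 ∧ (W'.map ⇑π₂).sum = 0)
            ∧ (U ::ₘ Bm.erase W).join ≤ S)
          ∧ Multiset.card (U ::ₘ Bm.erase W).join = Multiset.card U + k2 := by
        intro U hu1 hu2 hu3 hu4
        have hjoin : (U ::ₘ Bm.erase W).join = U + (Bm.erase W).join := Multiset.join_cons _ _
        refine ⟨⟨?_, ?_⟩, ?_⟩
        · intro W' hW'
          rcases Multiset.mem_cons.1 hW' with rfl | hmem'
          · exact ⟨hu1, hu2, hu3⟩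
          · exact hBW W' (Multiset.mem_of_mem_erase hmem')
        · rw [hjoin, hS']
          exact add_le_add_left hu4 _
        · rw [hjoin, Multiset.card_add]
      -- Property C
      obtain ⟨c', hc'pos, hc'eta, hstruct⟩ := hPC
      have hcc : c' = c := by
        rw [h2] at hc'eta
        have h9 : c' * (n2 - 1) = c * (n2 - 1) := by omega
        exact Nat.eq_of_mul_eq_mul_right (by omega) h9
      subst hcc
      obtain ⟨g, hginj, hAeq⟩ := hstruct (R.map ⇑π₂)
        (by rw [Multiset.card_map]; omega) noshort
      have hcountv := count_PC_val g hginj hAeq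
      have hcount0 := count_PC_zero g hAeq
      have stepP : ∀ w ∈ W, (∃ i, g i = π₂ w) → False := by
        intro w hw hex
        obtain ⟨i, hgi⟩ := hex
        have hrep : Multiset.replicate (n2 - 1) (g i) ≤ R.map ⇑π₂ := by
          rw [← Multiset.le_count_iff_replicate_le, hcountv i]
        obtain ⟨V, hVle, hVmap⟩ := exists_of_le_map' _ _ hrep
        have hcardV : Multiset.card V = n2 - 1 := by
          have := congrArg Multiset.card hVmap
          rwa [Multiset.card_map, Multiset.card_replicate] at this
        have hUcard : Multiset.card (w ::ₘ V) = n2 := by rw [Multiset.card_cons]; omega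
        have hUsum : ((w ::ₘ V).map ⇑π₂).sum = 0 := by
          rw [Multiset.map_cons, Multiset.sum_cons, hVmap, Multiset.sum_replicate, ← hgi]
          have h10 : g i + (n2 - 1) • g i = n2 • g i := by
            have h10' : (1 + (n2 - 1)) • g i = 1 • g i + (n2 - 1) • g i := add_nsmul _ _ _
            rw [one_nsmul] at h10'
            rw [← h10']
            congr 1
            omega
          rw [h10, nsmul_zmod_pi]
        have hUle : (w ::ₘ V) ≤ W + R := by
          rw [show (w ::ₘ V) = {w} + V from (Multiset.singleton_add w V).symm]
          exact add_le_add (Multiset.singleton_le.2 hw) hVle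
        obtain ⟨⟨hv1, hv2⟩, hv3⟩ := mkB (w ::ₘ V) (Multiset.cons_ne_zero)
          (le_of_eq hUcard) hUsum hUle
        have := hmax _ ⟨_, ⟨hv1, hv2⟩, rfl⟩ (Multiset.card_le_card hv2)
        omega
      -- Step Q
      obtain ⟨w₀, hw₀⟩ := Multiset.card_pos_iff_exists_mem.1 (show 0 < Multiset.card W by omega)
      obtain ⟨Z, hZle, hZsum, hZ1, hZ2⟩ := hη2 (π₂ w₀ ::ₘ R.map ⇑π₂)
        (by rw [Multiset.card_cons, Multiset.card_map]; omega)
      rw [hexp2] at hZ2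
      rcases le_cons_split' hZle with hZA | ⟨hmemZ, heraseZ⟩
      · exact noshort ⟨Z, hZA, hZsum, hZ1, by rw [hexp2]; exact hZ2⟩
      set B₀ := Z.erase (π₂ w₀) with hB₀def
      have hZeq : Z = π₂ w₀ ::ₘ B₀ := (Multiset.cons_erase hmemZ).symm
      have hB₀sum : π₂ w₀ + B₀.sum = 0 := by
        rw [hZeq, Multiset.sum_cons] at hZsum
        exact hZsum
      have hcB₀ : Multiset.card Z = Multiset.card B₀ + 1 := by
        rw [hZeq, Multiset.card_cons]
      obtain ⟨V₀, hV₀le, hV₀map⟩ := exists_of_le_map' B₀ R heraseZ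
      have hcV₀ : Multiset.card V₀ = Multiset.card B₀ := by
        have := congrArg Multiset.card hV₀map
        rwa [Multiset.card_map] at this
      have hU₀sum : ((w₀ ::ₘ V₀).map ⇑π₂).sum = 0 := by
        rw [Multiset.map_cons, Multiset.sum_cons, hV₀map]
        exact hB₀sum
      have hU₀le : (w₀ ::ₘ V₀) ≤ W + R := by
        rw [show (w₀ ::ₘ V₀) = {w₀} + V₀ from (Multiset.singleton_add w₀ V₀).symm]
        exact add_le_add (Multiset.singleton_le.2 hw₀) hV₀le
      obtain ⟨⟨hv1, hv2⟩, hv3⟩ := mkB (w₀ ::ₘ V₀) (Multiset.cons_ne_zero)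
        (by rw [Multiset.card_cons]; omega) hU₀sum hU₀le
      set B₁ := (w₀ ::ₘ V₀) ::ₘ Bm.erase W with hB₁def
      have hmaxB₁ := hmax _ ⟨B₁, ⟨hv1, hv2⟩, rfl⟩ (Multiset.card_le_card hv2)
      have hcB₁j : Multiset.card B₁.join = Multiset.card B₀ + 1 + k2 := by
        rw [hv3, Multiset.card_cons]
        omega
      have hle1 : Multiset.card B₀ + 1 ≤ Multiset.card W := by omega
      set R₁ := S - B₁.join with hR₁def
      have hR₁j : R₁ + B₁.join = S := tsub_add_cancel_of_le hv2
      have hcR₁ : Multiset.card R₁ + Multiset.card B₁.join = Multiset.card S := by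
        rw [← Multiset.card_add, hR₁j]
      have hcardB₁ : Multiset.card B₁ = m := by
        rw [hB₁def, Multiset.card_cons, hmerase]
        omega
      have noshort₁ : ¬ HasShortZeroSumSubseq (R₁.map ⇑π₂) := by
        intro hsh
        obtain ⟨B₂, hW₂, hle₂, hc₂, _, _⟩ := extend B₁ hv1 hv2 hsh
        have := fact1 B₂ hW₂ hle₂
        omega
      have hLR₁ : Multiset.card R₁ ≤ P2 := by
        by_contra h'
        exact noshort₁ (hη2 _ (by rw [Multiset.card_map]; omega))
      have hcB₀W : Multiset.card B₀ + 1 = Multiset.card W := by omega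
      have hcR₁eq : Multiset.card R₁ = P2 := by omega
      obtain ⟨h, hhinj, hA₁eq⟩ := hstruct (R₁.map ⇑π₂)
        (by rw [Multiset.card_map]; omega) noshort₁
      have hcount₁ := count_PC_cases h hhinj hA₁eq
      have hR₁eq : R₁ = (R - V₀) + W.erase w₀ := by
        ext v
        have e1 : Multiset.count v R₁ = Multiset.count v S - Multiset.count v B₁.join := by
          rw [hR₁def, Multiset.count_sub]
        have e2 : Multiset.count v S = Multiset.count v W + Multiset.count v R
            + Multiset.count v (Bm.erase W).join := by
          rw [hS', Multiset.count_add, Multiset.count_add]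
        have e3 : Multiset.count v B₁.join = Multiset.count v (w₀ ::ₘ V₀)
            + Multiset.count v (Bm.erase W).join := by
          rw [hB₁def, Multiset.join_cons, Multiset.count_add]
        have e4 : Multiset.count v (w₀ ::ₘ V₀) = Multiset.count v V₀
            + (if v = w₀ then 1 else 0) := by
          rw [Multiset.count_cons]
        have e5 : Multiset.count v V₀ ≤ Multiset.count v R := Multiset.count_le_of_le v hV₀le
        have e6 : Multiset.count v (R - V₀) = Multiset.count v R - Multiset.count v V₀ :=
          Multiset.count_sub _ _ _
        have e7 : Multiset.count v (W.erase w₀) = Multiset.count v W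
            - (if v = w₀ then 1 else 0) := by
          rcases eq_or_ne v w₀ with rfl | hne
          · rw [Multiset.count_erase_self, if_pos rfl]
          · rw [Multiset.count_erase_of_ne hne, if_neg hne]; omega
        have e8 : 1 ≤ Multiset.count w₀ W := Multiset.count_pos.2 hw₀
        rw [Multiset.count_add, e1, e2, e3, e4, e6, e7]
        split_ifs with hcase
        · subst hcase
          omega
        · omega
      have hmapR₁ : R₁.map ⇑π₂ = (R - V₀).map ⇑π₂ + (W.erase w₀).map ⇑π₂ := by
        rw [hR₁eq, Multiset.map_add]
      have hsplitA : R.map ⇑π₂ = B₀ + (R - V₀).map ⇑π₂ := by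
        have h11 : (R - V₀) + V₀ = R := tsub_add_cancel_of_le hV₀le
        conv_lhs => rw [← h11]
        rw [Multiset.map_add, hV₀map]
        exact add_comm _ _
      obtain ⟨w₁, hw₁⟩ := Multiset.card_pos_iff_exists_mem.1
        (show 0 < Multiset.card (W.erase w₀) by
          have hcWe : Multiset.card (W.erase w₀) = Multiset.card W - 1 :=
            Multiset.card_erase_of_mem hw₀
          omega)
      apply stepP w₁ (Multiset.mem_of_mem_erase hw₁)
      by_contra hno
      have c1 : Multiset.count (π₂ w₁) (R.map ⇑π₂) = 0 :=
        hcount0 _ (fun i hi => hno ⟨i, hi⟩)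
      have c2 : Multiset.count (π₂ w₁) B₀ = 0 := by
        have := Multiset.count_le_of_le (π₂ w₁) heraseZ
        omega
      have c3 : Multiset.count (π₂ w₁) ((R - V₀).map ⇑π₂) = 0 := by
        have := congrArg (Multiset.count (π₂ w₁)) hsplitA
        rw [Multiset.count_add] at this
        omega
      have c4 : Multiset.count (π₂ w₁) (R₁.map ⇑π₂) ≤ Multiset.card W - 1 := by
        rw [hmapR₁, Multiset.count_add, c3]
        have hcc4 := Multiset.count_le_card (π₂ w₁) ((W.erase w₀).map ⇑π₂)
        have hcWe : Multiset.card (W.erase w₀) = Multiset.card W - 1 :=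
          Multiset.card_erase_of_mem hw₀
        rw [Multiset.card_map, hcWe] at hcc4
        omega
      have c5 : 1 ≤ Multiset.count (π₂ w₁) (R₁.map ⇑π₂) := by
        rw [hmapR₁, Multiset.count_add]
        have hmem₁ : π₂ w₁ ∈ (W.erase w₀).map ⇑π₂ := Multiset.mem_map_of_mem _ hw₁
        have := Multiset.count_pos.2 hmem₁
        omega
      rcases hcount₁ (π₂ w₁) with c6 | c6
      · omega
      · omega
end

section
/- Let p be a prime, n a positive integer, and H a finite abelian p-group with p^n ≥ D(H). Then every sequence S over C_{p^n} ⊕ H of length |S| = 2p^n + D(H) - 2 contains a zero-sum subsequence T of length |T| ∈ {p^n, 2p^n}. -/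
open Finset in
private theorem exists_zero_sum_of_card_le {G : Type*} [AddCommGroup G] [Fintype G] (S : Multiset G)
    (h : Fintype.card G ≤ Multiset.card S) : ∃ T, T ≤ S ∧ T ≠ 0 ∧ T.sum = 0 := by
  classical
  set l := S.toList with hl
  have hlen : l.length = Multiset.card S := Multiset.length_toList S
  have key : ∀ j k : Fin (Multiset.card S + 1), (j : ℕ) < (k : ℕ) →
      (l.take (j : ℕ)).sum = (l.take (k : ℕ)).sum → ∃ T, T ≤ S ∧ T ≠ 0 ∧ T.sum = 0 := by
    intro j k hlt hsum
    set seg := (l.drop (j : ℕ)).take ((k : ℕ) - (j : ℕ)) with hseg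
    have htake : l.take (k : ℕ) = l.take (j : ℕ) ++ seg := by
      rw [hseg, ← List.take_add]
      congr 1
      omega
    have hsum2 : seg.sum = 0 := by
      rw [htake, List.sum_append] at hsum
      exact (left_eq_add.mp hsum)
    have hkle : (k : ℕ) ≤ l.length := by
      rw [hlen]; omega
    have hne : seg ≠ [] := by
      have hlseg : seg.length = min ((k : ℕ) - (j : ℕ)) (l.length - (j : ℕ)) := by
        rw [hseg, List.length_take, List.length_drop]
      intro hc
      rw [hc] at hlseg
      simp at hlseg
      omega
    refine ⟨(seg : Multiset G), ?_, by simpa using hne, by simpa using hsum2⟩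
    have hsub : seg.Sublist l := ((List.take_sublist _ _).trans (List.drop_sublist _ _))
    calc (seg : Multiset G) ≤ (l : Multiset G) := Multiset.coe_le.mpr hsub.subperm
      _ = S := Multiset.coe_toList S
  have hcard : Fintype.card G < Fintype.card (Fin (Multiset.card S + 1)) := by
    simpa using Nat.lt_succ_of_le h
  obtain ⟨j, k, hjk, hsum⟩ := Fintype.exists_ne_map_eq_of_card_lt
    (fun k : Fin (Multiset.card S + 1) => (l.take (k : ℕ)).sum) hcard
  rcases lt_or_gt_of_ne (fun hv => hjk (Fin.ext hv) : (j : ℕ) ≠ (k : ℕ)) with hlt | hlt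
  · exact key j k hlt hsum
  · exact key k j hlt hsum.symm

open Finset in
private theorem olson_exists_zero_sum {p : ℕ} (hp : p.Prime) {G : Type*} [AddCommGroup G]
    {ι : Type*} [Fintype ι] (e : ι → ℕ) (δ : ι → G)
    (hord : ∀ i, p ^ e i • δ i = 0)
    (hgen : ∀ a : G, ∃ c : ι → ℕ, a = ∑ i, c i • δ i)
    (S : Multiset G) (hcard : 1 + ∑ i, (p ^ e i - 1) ≤ Multiset.card S) :
    ∃ T, T ≤ S ∧ T ≠ 0 ∧ T.sum = 0 := by
  classical
  by_contra hcon
  push_neg at hcon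
  haveI : Fact p.Prime := ⟨hp⟩
  haveI : Fact (1 < p) := ⟨hp.one_lt⟩
  haveI : CharP (AddMonoidAlgebra (ZMod p) G) p :=
    charP_of_injective_ringHom
      (f := AddMonoidAlgebra.singleZeroRingHom (R := ZMod p) (M := G))
      (fun x y hxy => by
        simpa using congrArg (fun z => z.coeff 0) hxy) p
  set u : G → AddMonoidAlgebra (ZMod p) G := fun a => AddMonoidAlgebra.single a 1 with hu
  set X : G → AddMonoidAlgebra (ZMod p) G := fun a => 1 - u a with hX
  have hu_mul : ∀ a b, u a * u b = u (a + b) := by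
    intro a b; simp [hu, AddMonoidAlgebra.single_mul_single]
  have hu_pow : ∀ (a : G) (k : ℕ), u a ^ k = u (k • a) := by
    intro a k; simp [hu, AddMonoidAlgebra.single_pow]
  have hu_zero : u 0 = 1 := (AddMonoidAlgebra.one_def).symm
  have hXpow : ∀ i, X (δ i) ^ (p ^ e i) = 0 := by
    intro i
    rw [hX]
    simp only
    rw [sub_pow_char_pow, one_pow, hu_pow, hord, hu_zero, sub_self]
  have hXadd : ∀ a b, X (a + b) = X a + u a * X b := by
    intro a b
    simp only [hX, mul_sub, mul_one, hu_mul]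
    ring
  set J : Ideal (AddMonoidAlgebra (ZMod p) G) := Ideal.span (Set.range fun i => X (δ i)) with hJ
  have h0 : X 0 ∈ J := by
    have : X 0 = 0 := by simp [hX, hu_zero]
    rw [this]; exact Ideal.zero_mem _
  have hadd : ∀ a b, X a ∈ J → X b ∈ J → X (a + b) ∈ J := by
    intro a b ha hb
    rw [hXadd]; exact Ideal.add_mem _ ha (Ideal.mul_mem_left _ _ hb)
  have hsm : ∀ (k : ℕ) (a : G), X a ∈ J → X (k • a) ∈ J := by
    intro k a ha
    induction k with
    | zero => simpa using h0
    | succ k ih =>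
        rw [succ_nsmul]
        exact hadd _ _ ih ha
  have hmem : ∀ a, X a ∈ J := by
    intro a
    obtain ⟨c, rfl⟩ := hgen a
    have : ∀ s : Finset ι, X (∑ i ∈ s, c i • δ i) ∈ J := by
      intro s
      induction s using Finset.induction_on with
      | empty => simpa using h0
      | insert _ _ hx ih =>
          rw [Finset.sum_insert hx]
          exact hadd _ _ (hsm _ _ (Ideal.subset_span ⟨_, rfl⟩)) ih
    exact this univ
  have hrep : ∀ a, ∃ r : ι → AddMonoidAlgebra (ZMod p) G, X a = ∑ i, r i * X (δ i) := by
    intro a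
    have h1 := hmem a
    rw [hJ, Ideal.span, Submodule.mem_span_range_iff_exists_fun] at h1
    obtain ⟨c, hc⟩ := h1
    exact ⟨c, by simpa [smul_eq_mul] using hc.symm⟩
  set Mon : ℕ → Set (AddMonoidAlgebra (ZMod p) G) :=
    fun d => {y | ∃ c : ι → ℕ, (∑ i, c i) = d ∧ y = ∏ i, X (δ i) ^ c i} with hMon
  have key : ∀ T : Multiset G,
      (T.map X).prod ∈ Submodule.span (AddMonoidAlgebra (ZMod p) G) (Mon (Multiset.card T)) := by
    intro T
    induction T using Multiset.induction_on with
    | empty =>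
        refine Submodule.subset_span ⟨fun _ => 0, by simp, by simp⟩
    | cons a T ih =>
        rw [Multiset.map_cons, Multiset.prod_cons, Multiset.card_cons]
        refine Submodule.span_induction (p := fun y _ =>
          X a * y ∈ Submodule.span (AddMonoidAlgebra (ZMod p) G) (Mon (Multiset.card T + 1)))
          ?_ ?_ ?_ ?_ ih
        · rintro y ⟨c, hcd, rfl⟩
          obtain ⟨r, hr⟩ := hrep a
          rw [hr, Finset.sum_mul]
          refine Submodule.sum_mem _ ?_
          intro i _
          have hprod : ∏ j, X (δ j) ^ (c j + if j = i then 1 else 0)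
              = X (δ i) * ∏ j, X (δ j) ^ c j := by
            have h2 : ∏ j, X (δ j) ^ (if j = i then 1 else 0) = X (δ i) := by
              rw [Finset.prod_eq_single i (fun j _ hj => by simp [hj]) (by simp)]
              simp
            rw [← h2, ← Finset.prod_mul_distrib]
            exact Finset.prod_congr rfl fun j _ => by rw [← pow_add, add_comm]
          have heq : r i * X (δ i) * ∏ j, X (δ j) ^ c j
              = r i • ∏ j, X (δ j) ^ (c j + if j = i then 1 else 0) := by
            rw [smul_eq_mul, hprod, mul_assoc]
          rw [heq]
          refine Submodule.smul_mem _ _ (Submodule.subset_span ⟨_, ?_, rfl⟩)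
          rw [Finset.sum_add_distrib, hcd]
          simp
        · show X a * 0 ∈ _
          rw [mul_zero]; exact Submodule.zero_mem _
        · intro x y _ _ hx hy
          show X a * (x + y) ∈ _
          rw [mul_add]; exact Submodule.add_mem _ hx hy
        · intro r x _ hx
          show X a * (r • x) ∈ _
          rw [mul_smul_comm]; exact Submodule.smul_mem _ _ hx
  have hzero : ∀ y ∈ Mon (Multiset.card S), y = (0 : AddMonoidAlgebra (ZMod p) G) := by
    rintro y ⟨c, hcd, rfl⟩
    have hex : ∃ i, p ^ e i ≤ c i := by
      by_contra hno
      push_neg at hno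
      have hle : ∑ i, c i ≤ ∑ i, (p ^ e i - 1) :=
        Finset.sum_le_sum fun i _ => Nat.le_sub_one_of_lt (hno i)
      omega
    obtain ⟨i, hi⟩ := hex
    refine Finset.prod_eq_zero (Finset.mem_univ i) ?_
    have hci : c i = p ^ e i + (c i - p ^ e i) := by omega
    rw [hci, pow_add, hXpow, zero_mul]
  have hprod0 : ((S.map X).prod) = 0 := by
    have h1 := key S
    have h2 : Submodule.span (AddMonoidAlgebra (ZMod p) G) (Mon (Multiset.card S)) ≤ ⊥ := by
      rw [Submodule.span_le]
      intro y hy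
      simp [hzero y hy]
    simpa using h2 h1
  have E' : ∀ (T : Multiset G) (g : G), (∀ T', T' ≤ T → T'.sum ≠ g) → ((T.map X).prod).coeff g = 0 := by
    intro T
    induction T using Multiset.induction_on with
    | empty =>
        intro g hg
        have hg0 : (0 : G) ≠ g := fun h => hg 0 (le_refl 0) (by simpa using h)
        rw [Multiset.map_zero, Multiset.prod_zero, AddMonoidAlgebra.one_def]
        exact Finsupp.single_eq_of_ne hg0.symm
    | cons a T ih =>
        intro g hg
        rw [Multiset.map_cons, Multiset.prod_cons]
        have expand : (X a * (T.map X).prod).coeff g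
            = ((T.map X).prod).coeff g - ((T.map X).prod).coeff (-a + g) := by
          rw [hX]
          simp only
          rw [sub_mul, one_mul, AddMonoidAlgebra.coeff_sub, Finsupp.sub_apply]
          congr 1
          rw [hu]
          simp only
          rw [AddMonoidAlgebra.coeff_single_mul_apply, one_mul]
        rw [expand,
          ih g (fun T' hT' => hg T' (hT'.trans (Multiset.le_cons_self T a))),
          ih (-a + g) (fun T' hT' hs => hg (a ::ₘ T') (Multiset.cons_le_cons a hT')
            (by rw [Multiset.sum_cons, hs, add_neg_cancel_left])),
          sub_zero]
  have E0 : ∀ T : Multiset G, (∀ T', T' ≤ T → T' ≠ 0 → T'.sum ≠ 0) → ((T.map X).prod).coeff 0 = 1 := by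
    intro T
    induction T using Multiset.induction_on with
    | empty =>
        intro _
        rw [Multiset.map_zero, Multiset.prod_zero, AddMonoidAlgebra.one_def]
        exact Finsupp.single_eq_same
    | cons a T ih =>
        intro hT
        rw [Multiset.map_cons, Multiset.prod_cons]
        have expand : (X a * (T.map X).prod).coeff 0
            = ((T.map X).prod).coeff 0 - ((T.map X).prod).coeff (-a + 0) := by
          rw [hX]
          simp only
          rw [sub_mul, one_mul, AddMonoidAlgebra.coeff_sub, Finsupp.sub_apply]
          congr 1
          rw [hu]
          simp only
          rw [AddMonoidAlgebra.coeff_single_mul_apply, one_mul]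
        rw [expand, ih (fun T' h1 h2 => hT T' (h1.trans (Multiset.le_cons_self T a)) h2),
          E' T (-a + 0) ?_]
        · norm_num
        · intro T' hT' hs
          refine hT (a ::ₘ T') (Multiset.cons_le_cons a hT') (by simp) ?_
          rw [Multiset.sum_cons, hs]
          simp
  have h1 : ((S.map X).prod).coeff 0 = 1 := E0 S (fun T' ha hb => hcon T' ha hb)
  rw [hprod0] at h1
  rw [AddMonoidAlgebra.coeff_zero, Finsupp.zero_apply] at h1
  exact one_ne_zero h1.symm

open Finset in
private theorem davenport_lower {p : ℕ} (hp : p.Prime) {ι : Type*} [Fintype ι] [DecidableEq ι] (e : ι → ℕ)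
    {H : Type*} [AddCommGroup H] [Fintype H] (φ : H ≃+ ∀ i, ZMod (p ^ e i)) :
    ∑ i, (p ^ e i - 1) < davenport H := by
  classical
  set W : Multiset (∀ i, ZMod (p ^ e i)) :=
    ∑ i : ι, Multiset.replicate (p ^ e i - 1) (Pi.single i 1) with hWdef
  have hcard_aux : ∀ s : Finset ι, Multiset.card
      (∑ i ∈ s, Multiset.replicate (p ^ e i - 1) (Pi.single i (1 : ZMod (p ^ e i)) : ∀ j, ZMod (p ^ e j)))
      = ∑ i ∈ s, (p ^ e i - 1) := by
    intro s
    induction s using Finset.induction_on with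
    | empty => simp
    | insert _ _ hx ih => rw [Finset.sum_insert hx, Finset.sum_insert hx, Multiset.card_add,
        Multiset.card_replicate, ih]
  have hcardW : Multiset.card W = ∑ i, (p ^ e i - 1) := hcard_aux univ
  have hW : ∀ T, T ≤ W → T ≠ 0 → T.sum ≠ 0 := by
    intro T hT hT0 hsum
    obtain ⟨a, ha⟩ := Multiset.exists_mem_of_ne_zero hT0
    have haW := Multiset.mem_of_le hT ha
    rw [hWdef, Multiset.mem_sum] at haW
    obtain ⟨i0, -, hai⟩ := haW
    rw [Multiset.mem_replicate] at hai
    obtain ⟨hne0, rfl⟩ := hai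
    have hppos : 0 < p ^ e i0 := pow_pos hp.pos _
    have hgt : 1 < p ^ e i0 := by omega
    haveI : Fact (1 < p ^ e i0) := ⟨hgt⟩
    set π := Pi.evalAddMonoidHom (fun j => ZMod (p ^ e j)) i0 with hπ
    have hπapp : ∀ x : ∀ j, ZMod (p ^ e j), π x = x i0 := fun x => rfl
    have h1 : (T.map π).sum = 0 := by
      rw [← map_multiset_sum, hsum, map_zero]
    have helts : ∀ z ∈ T.map π, z = 0 ∨ z = 1 := by
      intro z hz
      obtain ⟨b, hbT, rfl⟩ := Multiset.mem_map.mp hz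
      have hbW := Multiset.mem_of_le hT hbT
      rw [hWdef, Multiset.mem_sum] at hbW
      obtain ⟨j, -, hbj⟩ := hbW
      rw [Multiset.mem_replicate] at hbj
      obtain ⟨-, rfl⟩ := hbj
      by_cases hji : j = i0
      · subst hji; right; rw [hπapp]; exact Pi.single_eq_same j 1
      · left
        rw [hπapp]
        exact Pi.single_eq_of_ne (fun hc => hji hc.symm) 1
    have hsum_formula : ∀ U : Multiset (ZMod (p ^ e i0)), (∀ z ∈ U, z = 0 ∨ z = 1) →
        U.sum = (Multiset.count 1 U : ZMod (p ^ e i0)) := by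
      intro U
      induction U using Multiset.induction_on with
      | empty => simp
      | cons z U ih =>
          intro h
          have hz := h z (Multiset.mem_cons_self z U)
          have hrest := fun w hw => h w (Multiset.mem_cons_of_mem hw)
          rcases hz with rfl | rfl
          · rw [Multiset.sum_cons, ih hrest, Multiset.count_cons]
            have : (1 : ZMod (p ^ e i0)) ≠ 0 := one_ne_zero
            simp [this]
          · rw [Multiset.sum_cons, ih hrest, Multiset.count_cons]
            simp only [if_pos rfl]
            push_cast
            ring
    have hc1 : 1 ≤ Multiset.count 1 (T.map π) := by
      have hmem1 : (1 : ZMod (p ^ e i0)) ∈ T.map π := by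
        refine Multiset.mem_map.mpr ⟨Pi.single i0 1, ha, ?_⟩
        rw [hπapp]
        exact Pi.single_eq_same i0 1
      exact Multiset.count_pos.mpr hmem1
    have hmapW : W.map π = ∑ i : ι, Multiset.replicate (p ^ e i - 1) (π (Pi.single i 1)) := by
      rw [hWdef]
      have : ∀ s : Finset ι, (∑ i ∈ s, Multiset.replicate (p ^ e i - 1)
          (Pi.single i (1 : ZMod (p ^ e i)) : ∀ j, ZMod (p ^ e j))).map π
          = ∑ i ∈ s, Multiset.replicate (p ^ e i - 1) (π (Pi.single i 1)) := by
        intro s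
        induction s using Finset.induction_on with
        | empty => simp
        | insert _ _ hx ih => rw [Finset.sum_insert hx, Finset.sum_insert hx, Multiset.map_add,
            Multiset.map_replicate, ih]
      exact this univ
    have hc2 : Multiset.count 1 (T.map π) ≤ p ^ e i0 - 1 := by
      have hle : Multiset.count 1 (T.map π) ≤ Multiset.count 1 (W.map π) :=
        Multiset.count_le_of_le _ (Multiset.map_le_map hT)
      have hcW : Multiset.count 1 (W.map π) = p ^ e i0 - 1 := by
        rw [hmapW, Multiset.count_sum']
        have hterm : ∀ j : ι, Multiset.count (1 : ZMod (p ^ e i0))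
            (Multiset.replicate (p ^ e j - 1) (π (Pi.single j 1)))
            = if j = i0 then p ^ e i0 - 1 else 0 := by
          intro j
          rw [Multiset.count_replicate, hπapp]
          by_cases hji : j = i0
          · subst hji
            rw [if_pos (Pi.single_eq_same j 1), if_pos rfl]
          · have h0 : Pi.single (M := fun j => ZMod (p ^ e j)) j 1 i0 = 0 :=
              Pi.single_eq_of_ne (fun hc => hji hc.symm) 1
            rw [if_neg, if_neg hji]
            simp [h0]
        rw [Finset.sum_congr rfl fun j _ => hterm j]
        simp
      omega
    rw [hsum_formula _ helts] at h1
    rw [ZMod.natCast_eq_zero_iff] at h1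
    have := Nat.le_of_dvd (by omega) h1
    omega
  set D := {d : ℕ | ∀ S : Multiset H, d ≤ Multiset.card S → ∃ T, T ≤ S ∧ T ≠ 0 ∧ T.sum = 0} with hD
  have hDne : D.Nonempty := ⟨Fintype.card H, fun S hS => exists_zero_sum_of_card_le S hS⟩
  have hmem : davenport H ∈ D := Nat.sInf_mem hDne
  by_contra hle
  push_neg at hle
  obtain ⟨T, hTle, hT0, hTsum⟩ := hmem (W.map φ.symm)
    (by rw [Multiset.card_map, hcardW]; exact hle)
  refine hW (T.map φ) ?_ ?_ ?_
  · have := Multiset.map_le_map (f := φ) hTle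
    rwa [Multiset.map_map, show (⇑φ ∘ ⇑φ.symm) = id by funext x; simp, Multiset.map_id] at this
  · simpa using hT0
  · rw [← map_multiset_sum, hTsum, map_zero]

open Finset in
theorem stmt_15 (p : ℕ) (hp : p.Prime) (n : ℕ) (hn : 0 < n)
    (H : Type*) [AddCommGroup H] [Fintype H] (hHp : ∃ k : ℕ, Fintype.card H = p ^ k)
    (hpD : davenport H ≤ p ^ n)
    (S : Multiset (ZMod (p ^ n) × H))
    (hS : Multiset.card S = 2 * p ^ n + davenport H - 2) :
    ∃ T, T ≤ S ∧ T.sum = 0 ∧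
      (Multiset.card T = p ^ n ∨ Multiset.card T = 2 * p ^ n) := by
  classical
  haveI : Fact p.Prime := ⟨hp⟩
  haveI : NeZero (p ^ n) := ⟨(pow_pos hp.pos n).ne'⟩
  have hpn1 : 1 ≤ p ^ n := Nat.one_le_iff_ne_zero.mpr (pow_pos hp.pos n).ne'
  obtain ⟨ι, hι, q, hq, e0, ⟨φ0⟩⟩ := AddCommGroup.equiv_directSum_zmod_of_finite H
  haveI := hι
  set φ1 : H ≃+ ∀ i, ZMod (q i ^ e0 i) :=
    φ0.trans (DirectSum.addEquivProd fun i => ZMod (q i ^ e0 i)) with hφ1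
  obtain ⟨k, hk⟩ := hHp
  have hqpos : ∀ i, 0 < q i ^ e0 i := fun i => pow_pos (hq i).pos _
  have hdvd : ∀ i, q i ^ e0 i ∣ p ^ k := by
    intro i
    have hcards : Fintype.card H = ∏ i, q i ^ e0 i := by
      rw [← Nat.card_eq_fintype_card, Nat.card_congr φ1.toEquiv, Nat.card_pi]
      exact Finset.prod_congr rfl fun i _ => Nat.card_zmod _
    rw [← hk, hcards]
    exact Finset.dvd_prod_of_mem _ (Finset.mem_univ i)
  set e : ι → ℕ := fun i => if q i = p then e0 i else 0 with he
  have hpe : ∀ i, q i ^ e0 i = p ^ e i := by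
    intro i
    by_cases hqp : q i = p
    · simp [he, hqp]
    · rw [he]; simp only [if_neg hqp, pow_zero]
      rcases Nat.eq_zero_or_pos (e0 i) with h0 | h0
      · rw [h0, pow_zero]
      · exfalso
        have h1 : q i ∣ p ^ k := dvd_trans (dvd_pow_self (q i) h0.ne') (hdvd i)
        have h2 : q i ∣ p := (hq i).dvd_of_dvd_pow h1
        exact hqp ((Nat.prime_dvd_prime_iff_eq (hq i) hp).mp h2)
  set φ : H ≃+ ∀ i, ZMod (p ^ e i) :=
    φ1.trans (AddEquiv.piCongrRight fun i => (ZMod.ringEquivCongr (hpe i)).toAddEquiv) with hφ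
  have hlow : ∑ i, (p ^ e i - 1) < davenport H := davenport_lower hp e φ
  set N := ∑ i, (p ^ e i - 1) with hN
  have hcast : ∀ (m : ℕ) [NeZero m] (z : ZMod m), ((z.val : ℕ) : ZMod m) = z := by
    intro m _ z
    exact ZMod.natCast_rightInverse z
  -- generators of the big group
  set δ : Bool ⊕ ι → (ZMod (p ^ n) × H) × ZMod (p ^ n) :=
    Sum.elim (fun b => cond b ((1, 0), 0) ((0, 0), 1))
      (fun i => ((0, φ.symm (Pi.single i 1)), 0)) with hδ
  set e2 : Bool ⊕ ι → ℕ := Sum.elim (fun _ => n) e with he2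
  have hord : ∀ j, p ^ e2 j • δ j = 0 := by
    intro j
    rcases j with b | i
    · have hone : (p ^ n) • (1 : ZMod (p ^ n)) = 0 := by
        rw [nsmul_eq_mul, mul_one, ZMod.natCast_self]
      rcases b with _ | _ <;>
        simp [hδ, he2, Prod.smul_mk, hone]
    · have hone : (p ^ e i) • (1 : ZMod (p ^ e i)) = 0 := by
        rw [nsmul_eq_mul, mul_one, ZMod.natCast_self]
      have hsingle : (p ^ e i) • (Pi.single i (1 : ZMod (p ^ e i)) : ∀ j, ZMod (p ^ e j)) = 0 := by
        have := map_nsmul (AddMonoidHom.single (fun j => ZMod (p ^ e j)) i) (p ^ e i) 1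
        simp only [AddMonoidHom.single_apply] at this
        rw [← this, hone, Pi.single_zero]
      have : (p ^ e i) • (φ.symm (Pi.single i 1)) = 0 := by
        rw [← map_nsmul, hsingle, map_zero]
      simp [hδ, he2, Prod.smul_mk, this]
  have hgen : ∀ a : (ZMod (p ^ n) × H) × ZMod (p ^ n), ∃ c : Bool ⊕ ι → ℕ,
      a = ∑ j, c j • δ j := by
    rintro ⟨⟨s, h⟩, t⟩
    refine ⟨Sum.elim (fun b => cond b s.val t.val) (fun i => ((φ h) i).val), ?_⟩
    rw [Fintype.sum_sum_type, Fintype.sum_bool]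
    simp only [Sum.elim_inl, Sum.elim_inr, hδ, Bool.cond_true, Bool.cond_false]
    have h1 : s.val • (((1, 0), 0) : (ZMod (p ^ n) × H) × ZMod (p ^ n)) = ((s, 0), 0) := by
      simp [Prod.smul_mk, nsmul_eq_mul, hcast (p ^ n) s]
    have h2 : t.val • ((((0 : ZMod (p ^ n)), (0 : H)), (1 : ZMod (p ^ n)))
        : (ZMod (p ^ n) × H) × ZMod (p ^ n)) = ((0, 0), t) := by
      simp [Prod.smul_mk, nsmul_eq_mul, hcast (p ^ n) t]
    have h3 : ∑ i, ((φ h) i).val • ((((0 : ZMod (p ^ n)), φ.symm (Pi.single i 1)),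
        (0 : ZMod (p ^ n))) : (ZMod (p ^ n) × H) × ZMod (p ^ n)) = ((0, h), 0) := by
      have hsingle : ∀ i, ((φ h) i).val • (Pi.single i (1 : ZMod (p ^ e i)) : ∀ j, ZMod (p ^ e j))
          = Pi.single i ((φ h) i) := by
        intro i
        have := map_nsmul (AddMonoidHom.single (fun j => ZMod (p ^ e j)) i) (((φ h) i).val) 1
        simp only [AddMonoidHom.single_apply] at this
        rw [← this, nsmul_eq_mul, mul_one]
        haveI : NeZero (p ^ e i) := ⟨(pow_pos hp.pos _).ne'⟩
        rw [hcast (p ^ e i) ((φ h) i)]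
      have hterm : ∀ i, ((φ h) i).val • ((((0 : ZMod (p ^ n)), φ.symm (Pi.single i 1)),
          (0 : ZMod (p ^ n))) : (ZMod (p ^ n) × H) × ZMod (p ^ n))
          = ((0, φ.symm (Pi.single i ((φ h) i))), 0) := by
        intro i
        rw [Prod.smul_mk, Prod.smul_mk, ← map_nsmul, hsingle i]
        simp
      rw [Finset.sum_congr rfl fun i _ => hterm i]
      have hmap : ∀ (F : ι → H), (∑ i, ((((0 : ZMod (p ^ n)), F i), (0 : ZMod (p ^ n)))
          : (ZMod (p ^ n) × H) × ZMod (p ^ n))) = ((0, ∑ i, F i), 0) := by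
        intro F
        have hms := map_sum ((AddMonoidHom.inl (ZMod (p ^ n) × H) (ZMod (p ^ n))).comp
          (AddMonoidHom.inr (ZMod (p ^ n)) H)) F univ
        simp only [AddMonoidHom.coe_comp, Function.comp_apply, AddMonoidHom.inr_apply,
          AddMonoidHom.inl_apply] at hms
        exact hms.symm
      rw [hmap, ← map_sum, Finset.univ_sum_single, AddEquiv.symm_apply_apply]
    rw [h1, h2, h3]
    ext <;> simp
  have hsum2 : ∑ j : Bool ⊕ ι, (p ^ e2 j - 1) = (p ^ n - 1) + (p ^ n - 1) + N := by
    rw [Fintype.sum_sum_type, Fintype.sum_bool]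
    simp only [he2, Sum.elim_inl, Sum.elim_inr, hN]
  have hcard2 : 1 + ∑ j : Bool ⊕ ι, (p ^ e2 j - 1) ≤ Multiset.card
      (S.map (fun z : ZMod (p ^ n) × H => (z, (1 : ZMod (p ^ n))))) := by
    rw [Multiset.card_map, hS, hsum2]
    omega
  obtain ⟨T2, hT2le, hT2ne, hT2sum⟩ := olson_exists_zero_sum hp e2 δ hord hgen _ hcard2
  set T : Multiset (ZMod (p ^ n) × H) := T2.map Prod.fst with hT
  have hTle : T ≤ S := by
    have h1 := Multiset.map_le_map (f := Prod.fst) hT2le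
    rw [Multiset.map_map] at h1
    simpa using h1
  have hsnd1 : ∀ z ∈ T2, z.2 = (1 : ZMod (p ^ n)) := by
    intro z hz
    have hzS := Multiset.mem_of_le hT2le hz
    obtain ⟨w, hw, rfl⟩ := Multiset.mem_map.mp hzS
    rfl
  have hTsum : T.sum = 0 := by
    have h2 : (T2.map (AddMonoidHom.fst (ZMod (p ^ n) × H) (ZMod (p ^ n)))).sum = 0 := by
      rw [← map_multiset_sum, hT2sum, map_zero]
    simpa [hT] using h2
  have hdvd2 : p ^ n ∣ Multiset.card T2 := by
    have h2 : (T2.map (AddMonoidHom.snd (ZMod (p ^ n) × H) (ZMod (p ^ n)))).sum = 0 := by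
      rw [← map_multiset_sum, hT2sum, map_zero]
    have h3 : T2.map (AddMonoidHom.snd (ZMod (p ^ n) × H) (ZMod (p ^ n)))
        = Multiset.replicate (Multiset.card T2) 1 := by
      have h4 : T2.map (AddMonoidHom.snd (ZMod (p ^ n) × H) (ZMod (p ^ n)))
          = T2.map (fun _ => (1 : ZMod (p ^ n))) :=
        Multiset.map_congr rfl (fun z hz => by simp [hsnd1 z hz])
      rw [h4, Multiset.map_const']
    rw [h3, Multiset.sum_replicate, nsmul_eq_mul, mul_one] at h2
    exact (ZMod.natCast_eq_zero_iff _ _).mp h2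
  have hcardT : Multiset.card T = Multiset.card T2 := Multiset.card_map _ _
  have h1le : 1 ≤ Multiset.card T2 := by
    rw [Nat.one_le_iff_ne_zero]
    simpa [Ne, Multiset.card_eq_zero] using hT2ne
  have hle2 : Multiset.card T2 ≤ 2 * p ^ n + davenport H - 2 := by
    have h5 := Multiset.card_le_card hT2le
    rwa [Multiset.card_map, hS] at h5
  obtain ⟨m, hm⟩ := hdvd2
  refine ⟨T, hTle, hTsum, ?_⟩
  rw [hcardT]
  rcases m with _ | _ | _ | m
  · omega
  · left; omega
  · right; omega
  · exfalso
    have h6 : p ^ n * 3 ≤ Multiset.card T2 := by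
      rw [hm]; exact Nat.mul_le_mul_left _ (by omega)
    omega
end

section
/- Let G be a non-cyclic finite abelian group. Then every integer t with D(G) + 1 ≤ t ≤ min{2·exp(G) + 1, η(G) - 1} belongs to C_0(G); that is, every zero-sum sequence over G of length exactly t contains a short zero-sum subsequence. -/
lemma davenport_spec (G : Type*) [AddCommGroup G] [Finite G] :
    ∀ S : Multiset G, davenport G ≤ Multiset.card S → ∃ T, T ≤ S ∧ T ≠ 0 ∧ T.sum = 0 := by
  have hmem : davenport G ∈ {d : ℕ | ∀ S : Multiset G, d ≤ Multiset.card S →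
      ∃ T, T ≤ S ∧ T ≠ 0 ∧ T.sum = 0} := by
    apply Nat.sInf_mem
    haveI := Fintype.ofFinite G
    refine ⟨Fintype.card G, fun S hS => ?_⟩
    set L := S.toList with hL
    have hlen : L.length = Multiset.card S := Multiset.length_toList S
    have key : ∀ i j : ℕ, i < j → j ≤ L.length → (L.take i).sum = (L.take j).sum →
        ∃ T : Multiset G, T ≤ S ∧ T ≠ 0 ∧ T.sum = 0 := by
      intro i j hij hjle hsum
      refine ⟨((L.drop i).take (j - i) : List G), ?_, ?_, ?_⟩
      · rw [← Multiset.coe_toList S]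
        exact Multiset.coe_le.mpr
          (((List.take_sublist _ _).trans (List.drop_sublist _ _)).subperm)
      · intro h
        rw [Multiset.coe_eq_zero] at h
        have := congrArg List.length h
        simp [List.length_take, List.length_drop] at this
        omega
      · have hdecomp : L.take j = L.take i ++ (L.drop i).take (j - i) := by
          have h := @List.take_add _ L i (j - i)
          rw [← h]
          congr 1
          omega
        have h2 : (L.take j).sum = (L.take i).sum + ((L.drop i).take (j - i)).sum := by
          rw [hdecomp, List.sum_append]
        have : ((L.drop i).take (j - i)).sum = 0 := by
          rw [hsum] at h2
          exact (left_eq_add.mp h2)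
        simpa using this
    obtain ⟨a, b, hab, heq⟩ := Fintype.exists_ne_map_eq_of_card_lt
      (fun i : Fin (Multiset.card S + 1) => (L.take (i : ℕ)).sum)
      (by simp; omega)
    have hne : (a : ℕ) ≠ b := fun h => hab (Fin.ext h)
    have ha := a.isLt
    have hb := b.isLt
    rcases hne.lt_or_gt with h | h
    · exact key a b h (by omega) heq
    · exact key b a h (by omega) heq.symm
  exact hmem

theorem stmt_17 (G : Type*) [AddCommGroup G] [Finite G] (hG : ¬ IsAddCyclic G)
    (t : ℕ) (h1 : davenport G + 1 ≤ t)
    (h2 : t ≤ min (2 * AddMonoid.exponent G + 1) (etaConst G - 1)) :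
    t ∈ C0 G := by
  obtain ⟨h2a, h2b⟩ := le_min_iff.mp h2
  refine ⟨h1, h2b, ?_⟩
  intro S hcard hsum
  haveI := Classical.decEq G
  have hS0 : S ≠ 0 := by
    intro h
    subst h
    simp at hcard
    omega
  obtain ⟨a, ha⟩ := Multiset.exists_mem_of_ne_zero hS0
  obtain ⟨S', rfl⟩ := Multiset.exists_cons_of_mem ha
  have hcard' : Multiset.card S' + 1 = t := by simpa using hcard
  obtain ⟨T, hTle, hTne, hTsum⟩ := davenport_spec G S' (by omega)
  have hTleS : T ≤ a ::ₘ S' := hTle.trans (Multiset.le_cons_self _ _)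
  have hdec : (a ::ₘ S') = (a ::ₘ S' - T) + T := (tsub_add_cancel_of_le hTleS).symm
  have hcardeq : Multiset.card (a ::ₘ S') = Multiset.card (a ::ₘ S' - T) + Multiset.card T := by
    conv_lhs => rw [hdec]
    rw [Multiset.card_add]
  have hUsum : (a ::ₘ S' - T).sum = 0 := by
    have h := congrArg Multiset.sum hdec
    rw [Multiset.sum_add, hTsum, add_zero] at h
    rw [← h, hsum]
  have hTpos : 1 ≤ Multiset.card T := by
    rcases Nat.eq_zero_or_pos (Multiset.card T) with h | h
    · exact absurd (Multiset.card_eq_zero.mp h) hTne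
    · exact h
  have hTcard_le : Multiset.card T ≤ Multiset.card S' := Multiset.card_le_card hTle
  by_cases hc : Multiset.card T ≤ AddMonoid.exponent G
  · exact ⟨T, hTleS, hTsum, hTpos, hc⟩
  · refine ⟨a ::ₘ S' - T, Multiset.sub_le_self _ _, hUsum, ?_, ?_⟩ <;>
    · simp only [Multiset.card_cons] at hcardeq
      omega
end

section
/- Let G be a non-cyclic finite abelian group with exp(G) = n. Then the set C_0(G) ∪ {η(G)} does not contain n+1 consecutive integers; that is, there is no integer t such that all of t, t+1, …, t+n belong to C_0(G) ∪ {η(G)}. -/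
/-- Extract a submultiset of any prescribed smaller cardinality. -/
lemma exists_le_card_eq {α : Type*} (S : Multiset α) (m : ℕ) (h : m ≤ Multiset.card S) :
    ∃ W : Multiset α, W ≤ S ∧ Multiset.card W = m := by
  classical
  refine ⟨(S.toList.take m : List α), ?_, ?_⟩
  · have h1 := List.take_sublist m S.toList
    have := Multiset.coe_le.2 h1.subperm
    simpa [Multiset.coe_toList] using this
  · simp only [Multiset.coe_card, List.length_take]
    have : S.toList.length = Multiset.card S := by
      rw [← Multiset.coe_card, Multiset.coe_toList]
    omega

/-- The defining set of `etaConst` is nonempty for a finite group. -/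
lemma eta_set_nonempty (G : Type*) [AddCommGroup G] [Finite G] :
    {d : ℕ | ∀ S : Multiset G, d ≤ Multiset.card S → HasShortZeroSumSubseq S}.Nonempty := by
  classical
  haveI := Fintype.ofFinite G
  have hexp : AddMonoid.exponent G ≠ 0 := AddMonoid.exponent_ne_zero_of_finite
  refine ⟨Fintype.card G * (AddMonoid.exponent G - 1) + 1, fun S hS => ?_⟩
  have hg : ∃ g : G, AddMonoid.exponent G ≤ S.count g := by
    by_contra hc
    push_neg at hc
    have hsum : ∑ a ∈ S.toFinset, S.count a = Multiset.card S :=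
      Multiset.toFinset_sum_count_eq S
    have hb : ∑ a ∈ S.toFinset, S.count a ≤ S.toFinset.card * (AddMonoid.exponent G - 1) := by
      apply Finset.sum_le_card_nsmul
      intro a _
      have := hc a
      omega
    have hcard : S.toFinset.card ≤ Fintype.card G := S.toFinset.card_le_univ
    have : S.toFinset.card * (AddMonoid.exponent G - 1) ≤
        Fintype.card G * (AddMonoid.exponent G - 1) := Nat.mul_le_mul_right _ hcard
    omega
  obtain ⟨g, hg⟩ := hg
  have hord_pos : 0 < addOrderOf g := addOrderOf_pos g
  have hord_dvd : addOrderOf g ∣ AddMonoid.exponent G := AddMonoid.addOrder_dvd_exponent g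
  have hord_le : addOrderOf g ≤ AddMonoid.exponent G :=
    Nat.le_of_dvd (Nat.pos_of_ne_zero hexp) hord_dvd
  refine ⟨Multiset.replicate (addOrderOf g) g, ?_, ?_, ?_, ?_⟩
  · rw [Multiset.le_iff_count]
    intro a
    rw [Multiset.count_replicate]
    split
    · next h => subst h; omega
    · exact Nat.zero_le _
  · rw [Multiset.sum_replicate]
    exact addOrderOf_nsmul_eq_zero g
  · simpa using Nat.one_le_iff_ne_zero.mpr hord_pos.ne'
  · simpa using hord_le

theorem stmt_18 (G : Type*) [AddCommGroup G] [Finite G] (hG : ¬ IsAddCyclic G)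
    (n : ℕ) (hn : AddMonoid.exponent G = n) :
    ¬ ∃ t : ℕ, ∀ i ≤ n, t + i ∈ C0 G ∪ {etaConst G} := by
  classical
  rintro ⟨t, ht⟩
  have hn1 : 1 ≤ n := by
    have : AddMonoid.exponent G ≠ 0 := AddMonoid.exponent_ne_zero_of_finite
    omega
  have hne := eta_set_nonempty G
  have heta_mem : ∀ S : Multiset G, etaConst G ≤ Multiset.card S → HasShortZeroSumSubseq S :=
    Nat.sInf_mem hne
  -- every t+i with i ≤ n-1 lies in C0
  have hC0 : ∀ i, i + 1 ≤ n → t + i ∈ C0 G := by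
    intro i hi
    rcases ht i (by omega) with hc | he
    · exact hc
    · exfalso
      simp only [Set.mem_singleton_iff] at he
      rcases ht (i + 1) hi with hc' | he'
      · have h2 := hc'.2.1
        omega
      · simp only [Set.mem_singleton_iff] at he'
        omega
  have htn : t + n ≤ etaConst G := by
    rcases ht n le_rfl with hc | he
    · have := hc.2.1; omega
    · simp only [Set.mem_singleton_iff] at he; omega
  -- W : a sequence of length t+n-1 with no short zero-sum subsequence
  obtain ⟨S, hScard, hSns⟩ :
      ∃ S : Multiset G, t + n - 1 ≤ Multiset.card S ∧ ¬ HasShortZeroSumSubseq S := by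
    have hnot : t + n - 1 ∉
        {d : ℕ | ∀ S : Multiset G, d ≤ Multiset.card S → HasShortZeroSumSubseq S} := by
      apply Nat.notMem_of_lt_sInf
      show t + n - 1 < etaConst G
      omega
    simp only [Set.mem_setOf_eq, not_forall] at hnot
    obtain ⟨S, hS1, hS2⟩ := hnot
    exact ⟨S, hS1, hS2⟩
  obtain ⟨W, hWS, hWcard⟩ := exists_le_card_eq S (t + n - 1) hScard
  have hWns : ¬ HasShortZeroSumSubseq W := by
    rintro ⟨T, hT, hs, h1, h2⟩
    exact hSns ⟨T, hT.trans hWS, hs, h1, h2⟩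
  set g : G := -W.sum with hg_def
  set X : Multiset G := g ::ₘ W with hX_def
  have hXsum : X.sum = 0 := by simp [hX_def, hg_def]
  have hXcard : Multiset.card X = t + n := by
    rw [hX_def, Multiset.card_cons, hWcard]; omega
  have hXshort : HasShortZeroSumSubseq X := by
    rcases ht n le_rfl with hc | he
    · exact hc.2.2 X hXcard hXsum
    · simp only [Set.mem_singleton_iff] at he
      exact heta_mem X (by omega)
  obtain ⟨U, hUX, hUsum, hU1, hUn⟩ := hXshort
  rw [hn] at hUn
  have hgU : g ∈ U := by
    by_contra hg
    apply hWns
    refine ⟨U, ?_, hUsum, hU1, by rw [hn]; exact hUn⟩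
    rw [Multiset.le_iff_count]
    intro a
    have hcount := Multiset.le_iff_count.1 hUX a
    rw [hX_def, Multiset.count_cons] at hcount
    by_cases hag : a = g
    · subst hag
      have : U.count g = 0 := Multiset.count_eq_zero_of_notMem hg
      omega
    · simpa [hag] using hcount
  set U' : Multiset G := U.erase g with hU'_def
  have hU'W : U' ≤ W := by
    have h := Multiset.erase_le_erase g hUX
    rwa [hX_def, Multiset.erase_cons_head] at h
  have hU'card : Multiset.card U' = Multiset.card U - 1 := by
    rw [hU'_def, Multiset.card_erase_of_mem hgU]; rfl
  have hU'sum : U'.sum = W.sum := by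
    have hcons : g ::ₘ U' = U := Multiset.cons_erase hgU
    have : (g ::ₘ U').sum = 0 := by rw [hcons]; exact hUsum
    rw [Multiset.sum_cons] at this
    have h2 : U'.sum = -g := eq_neg_of_add_eq_zero_right this
    rw [h2, hg_def, neg_neg]
  set V : Multiset G := W - U' with hV_def
  have hVW : V ≤ W := tsub_le_self
  have hVadd : V + U' = W := tsub_add_cancel_of_le hU'W
  have hVsum : V.sum = 0 := by
    have : V.sum + U'.sum = W.sum := by rw [← Multiset.sum_add, hVadd]
    rw [hU'sum] at this
    exact add_right_cancel (b := W.sum) (c := 0) (by rw [zero_add]; exact this)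
  have hVcard : Multiset.card V = t + n - 1 - Multiset.card U' := by
    rw [hV_def, Multiset.card_sub hU'W, hWcard]
  have hmem : t + (n - 1 - Multiset.card U') ∈ C0 G := hC0 _ (by omega)
  obtain ⟨T, hTV, hTsum, hT1, hT2⟩ := hmem.2.2 V (by omega) hVsum
  exact hWns ⟨T, hTV.trans hVW, hTsum, hT1, hT2⟩
end
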